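/- arXiv:1506.05904 — 2 statements merged into one kernel-verified Lean document; each statement's English description precedes it below -/
import Mathlib

section
/- Let V be a 2n-dimensional real symplectic vector space with symplectic form ω, and let L: Λ^h V* → Λ^{h+2} V* be the Lefschetz operator α ↦ ω ∧ α. Then for 0 ≤ h ≤ n, the map L^{n-h}: Λ^h V* → Λ^{2n-h} V* is a linear isomorphism. -/
set_option synthInstance.maxHeartbeats 1000000
set_option maxHeartbeats 1000000

open ExteriorAlgebra

/-- The space of `h`-covectors `Λ^h V*`, realized as the degree-`h` piece of the
exterior algebra of the dual space. -/
noncomputable def gradePiece (V : Type) [AddCommGroup V] [Module ℝ V] (h : ℕ) :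
    Submodule ℝ (ExteriorAlgebra ℝ (Module.Dual ℝ V)) :=
  (LinearMap.range (ι ℝ : Module.Dual ℝ V →ₗ[ℝ] ExteriorAlgebra ℝ (Module.Dual ℝ V))) ^ h

namespace HL

variable {M : Type} [AddCommGroup M] [Module ℝ M]

/-- contraction operator -/
noncomputable def D (d : Module.Dual ℝ M) :
    ExteriorAlgebra ℝ M →ₗ[ℝ] ExteriorAlgebra ℝ M :=
  CliffordAlgebra.contractLeft d

lemma D_ι_mul (d : Module.Dual ℝ M) (m : M) (x : ExteriorAlgebra ℝ M) :
    D d (ι ℝ m * x) = d m • x - ι ℝ m * D d x :=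
  CliffordAlgebra.contractLeft_ι_mul d m x

lemma D_algebraMap (d : Module.Dual ℝ M) (r : ℝ) :
    D d (algebraMap ℝ (ExteriorAlgebra ℝ M) r) = 0 :=
  CliffordAlgebra.contractLeft_algebraMap _ d r

lemma D_one' (d : Module.Dual ℝ M) : D d (1 : ExteriorAlgebra ℝ M) = 0 :=
  CliffordAlgebra.contractLeft_one _ d

lemma ι_anticomm (a b : M) : ι ℝ a * ι ℝ b = -(ι ℝ b * ι ℝ a) :=
  eq_neg_of_add_eq_zero_left (ι_add_mul_swap a b)

lemma ι_swap (a b : M) (x : ExteriorAlgebra ℝ M) :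
    ι ℝ a * (ι ℝ b * x) = -(ι ℝ b * (ι ℝ a * x)) := by
  rw [← mul_assoc, ι_anticomm, neg_mul, mul_assoc]

lemma ι_sq (a : M) (x : ExteriorAlgebra ℝ M) : ι ℝ a * (ι ℝ a * x) = 0 := by
  rw [← mul_assoc, ι_sq_zero, zero_mul]

lemma commute_ι_pair (m a b : M) : Commute (ι ℝ m) (ι ℝ a * ι ℝ b) := by
  show _ = _
  rw [← mul_assoc, ι_anticomm m a, neg_mul, mul_assoc, ι_anticomm m b, mul_neg, neg_neg,
    ← mul_assoc]

end HL

namespace HL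

variable {M : Type} [AddCommGroup M] [Module ℝ M]

/-- Reconstruction of an element of the exterior algebra from its four components
with respect to a distinguished pair of vectors with dual functionals. -/
theorem recon (eL fL : M) (εL φL : Module.Dual ℝ M) (p : M →ₗ[ℝ] M)
    (hp : ∀ m : M, m = p m + εL m • eL + φL m • fL) (x : ExteriorAlgebra ℝ M) :
    x = map p x + ι ℝ eL * map p (D εL x) + ι ℝ fL * map p (D φL x)
      + ι ℝ eL * ι ℝ fL * map p (D φL (D εL x)) := by
  set g := ι ℝ eL with hg
  set hh := ι ℝ fL with hhdef
  set E := ExteriorAlgebra.map (R := ℝ) p with hE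
  set R : ExteriorAlgebra ℝ M → ExteriorAlgebra ℝ M := fun z =>
    E z + g * E (D εL z) + hh * E (D φL z) + g * hh * E (D φL (D εL z)) with hR
  have Radd : ∀ y z, R (y + z) = R y + R z := by
    intro y z
    simp only [hR, map_add, mul_add]
    abel
  have Rsmul : ∀ (r : ℝ) z, R (r • z) = r • R z := by
    intro r z
    simp only [hR, map_smul, mul_smul_comm, smul_add]
  have aux : ∀ (m : M) (y : ExteriorAlgebra ℝ M), R (ι ℝ m * y) = ι ℝ m * R y := by
    intro m y
    have hm : ι ℝ m = ι ℝ (p m) + εL m • g + φL m • hh := by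
      conv_lhs => rw [hp m]
      simp [hg, hhdef]
    have hEι : ∀ m' : M, E (ι ℝ m') = ι ℝ (p m') := fun m' => map_apply_ι p m'
    simp only [hR, D_ι_mul, map_sub, map_smul, map_mul, hEι]
    rw [hm]
    set w := ι ℝ (p m) with hw
    set a' := E y
    set b' := E (D εL y)
    set c' := E (D φL y)
    set d' := E (D φL (D εL y))
    have hwg : ∀ z, w * (g * z) = -(g * (w * z)) := fun z => ι_swap _ _ z
    have hwh : ∀ z, w * (hh * z) = -(hh * (w * z)) := fun z => ι_swap _ _ z
    have hgg : ∀ z, g * (g * z) = 0 := fun z => ι_sq _ z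
    have hhh2 : ∀ z, hh * (hh * z) = 0 := fun z => ι_sq _ z
    have hhg : ∀ z, hh * (g * z) = -(g * (hh * z)) := fun z => ι_swap _ _ z
    simp only [mul_add, add_mul, mul_sub, sub_mul, smul_mul_assoc, mul_smul_comm, mul_assoc,
      hwg, hwh, hgg, hhh2, hhg, mul_neg, neg_neg, mul_zero, smul_neg, smul_zero, add_zero,
      zero_add, neg_zero, sub_eq_add_neg]
    abel
  have base : R 1 = 1 := by
    simp only [hR, D_one', map_zero, mul_zero, map_one, add_zero]
  have key : ∀ z, (∀ y, R (z * y) = z * R y) := by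
    intro z
    induction z using ExteriorAlgebra.induction with
    | algebraMap r =>
      intro y
      rw [Algebra.algebraMap_eq_smul_one, smul_mul_assoc, one_mul, Rsmul, smul_mul_assoc, one_mul]
    | ι m => exact aux m
    | mul a b ha hb =>
      intro y
      rw [mul_assoc, ha, hb, mul_assoc]
    | add a b ha hb =>
      intro y
      rw [add_mul, Radd, ha, hb, add_mul]
  have := key x 1
  rw [mul_one, base, mul_one] at this
  exact this.symm

end HL

namespace HL

variable {M : Type} [AddCommGroup M] [Module ℝ M]

/-- span of the symplectic family inside `M` -/
def Vsp {n : ℕ} (e f : Fin n → M) : Submodule ℝ M :=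
  Submodule.span ℝ (Set.range e ∪ Set.range f)

/-- degree-one part generated by the family, inside the exterior algebra -/
noncomputable def W {n : ℕ} (e f : Fin n → M) : Submodule ℝ (ExteriorAlgebra ℝ M) :=
  (Vsp e f).map (ι ℝ)

/-- the symplectic form -/
noncomputable def om {n : ℕ} (e f : Fin n → M) : ExteriorAlgebra ℝ M :=
  ∑ i, ι ℝ (e i) * ι ℝ (f i)

lemma ιe_mem_W {n : ℕ} (e f : Fin n → M) (i : Fin n) : ι ℝ (e i) ∈ W e f :=
  Submodule.mem_map_of_mem (Submodule.subset_span (Or.inl ⟨i, rfl⟩))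

lemma ιf_mem_W {n : ℕ} (e f : Fin n → M) (i : Fin n) : ι ℝ (f i) ∈ W e f :=
  Submodule.mem_map_of_mem (Submodule.subset_span (Or.inr ⟨i, rfl⟩))

lemma pow_mono {A : Type*} [CommRing A]  {B : Type*} [Ring B] [Algebra A B]
    {P Q : Submodule A B} (h : P ≤ Q) : ∀ k : ℕ, P ^ k ≤ Q ^ k
  | 0 => le_rfl
  | (k+1) => by
    rw [pow_succ, pow_succ]
    exact mul_le_mul' (pow_mono h k) h

lemma D_mem_one (d : Module.Dual ℝ M) {x : ExteriorAlgebra ℝ M}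
    (hx : x ∈ (1 : Submodule ℝ (ExteriorAlgebra ℝ M))) : D d x = 0 := by
  obtain ⟨r, rfl⟩ := Submodule.mem_one.mp hx
  exact D_algebraMap d r

lemma D_pow_mem (d : Module.Dual ℝ M) {V : Submodule ℝ M} (h : ℕ) :
    ∀ x : ExteriorAlgebra ℝ M, x ∈ (V.map (ι ℝ)) ^ h → D d x ∈ (V.map (ι ℝ)) ^ (h - 1) := by
  induction h with
  | zero =>
    intro x hx
    rw [pow_zero] at hx
    rw [D_mem_one d hx]
    exact Submodule.zero_mem _
  | succ h ih =>
    intro x hx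
    rw [pow_succ'] at hx
    refine Submodule.mul_induction_on hx (fun m hm y hy => ?_) (fun y z hy hz => ?_)
    · obtain ⟨v, hv, rfl⟩ := hm
      rw [D_ι_mul]
      rw [Nat.add_sub_cancel]
      refine Submodule.sub_mem _ (Submodule.smul_mem _ _ hy) ?_
      rcases Nat.eq_zero_or_pos h with h0 | hpos
      · subst h0
        rw [pow_zero] at hy
        rw [D_mem_one d hy, mul_zero]
        exact Submodule.zero_mem _
      · have hDy := ih y hy
        have h2 : ι ℝ v * D d y ∈ (V.map (ι ℝ)) * (V.map (ι ℝ)) ^ (h - 1) :=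
          Submodule.mul_mem_mul (Submodule.mem_map_of_mem hv) hDy
        have hform : h = (h - 1) + 1 := by omega
        rw [hform, pow_succ']
        exact h2
    · rw [map_add]
      exact Submodule.add_mem _ hy hz

lemma map_pow_mem (q : M →ₗ[ℝ] M) {V V' : Submodule ℝ M} (hq : ∀ v ∈ V, q v ∈ V')
    (h : ℕ) (x : ExteriorAlgebra ℝ M) (hx : x ∈ (V.map (ι ℝ)) ^ h) :
    ExteriorAlgebra.map q x ∈ (V'.map (ι ℝ)) ^ h := by
  induction hx using Submodule.pow_induction_on_left' with
  | algebraMap r => simpa using Submodule.algebraMap_mem (S := (V'.map (ι ℝ)) ^ 0) r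
  | add x y i hx hy ihx ihy => rw [map_add]; exact Submodule.add_mem _ ihx ihy
  | mem_mul m hm i x hx ihx =>
    obtain ⟨v, hv, rfl⟩ := hm
    rw [map_mul, map_apply_ι]
    rw [pow_succ']
    exact Submodule.mul_mem_mul (Submodule.mem_map_of_mem (hq v hv)) ihx

lemma commute_ι_om {n : ℕ} (m : M) (e f : Fin n → M) : Commute (ι ℝ m) (om e f) :=
  Commute.sum_right _ _ _ (fun i _ => commute_ι_pair m (e i) (f i))

lemma commute_pair_om {n : ℕ} (a b : M) (e f : Fin n → M) :
    Commute (ι ℝ a * ι ℝ b) (om e f) :=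
  Commute.mul_left (commute_ι_om a e f) (commute_ι_om b e f)

lemma ompow_ι (e f : Fin n → M) (j : ℕ) (m : M) (z : ExteriorAlgebra ℝ M) :
    om e f ^ j * (ι ℝ m * z) = ι ℝ m * (om e f ^ j * z) := by
  rw [← mul_assoc, ← ((commute_ι_om m e f).pow_right j).eq, mul_assoc]

lemma ompow_pair (e f : Fin n → M) (j : ℕ) (a b : M) (z : ExteriorAlgebra ℝ M) :
    om e f ^ j * ((ι ℝ a * ι ℝ b) * z) = (ι ℝ a * ι ℝ b) * (om e f ^ j * z) := by
  rw [← mul_assoc, ← ((commute_pair_om a b e f).pow_right j).eq, mul_assoc]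

lemma D_pair_mul (d : Module.Dual ℝ M) {a b : M} (ha : d a = 0) (hb : d b = 0)
    (x : ExteriorAlgebra ℝ M) :
    D d (ι ℝ a * ι ℝ b * x) = ι ℝ a * ι ℝ b * D d x := by
  rw [mul_assoc, D_ι_mul, ha, zero_smul, zero_sub, D_ι_mul, hb, zero_smul, zero_sub,
    mul_neg, neg_neg, mul_assoc]

lemma D_om_mul {n : ℕ} (d : Module.Dual ℝ M) (e f : Fin n → M)
    (he : ∀ i, d (e i) = 0) (hf : ∀ i, d (f i) = 0) (x : ExteriorAlgebra ℝ M) :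
    D d (om e f * x) = om e f * D d x := by
  rw [om, Finset.sum_mul, map_sum, Finset.sum_mul]
  exact Finset.sum_congr rfl fun i _ => D_pair_mul d (he i) (hf i) x

lemma D_om_pow_mul {n : ℕ} (d : Module.Dual ℝ M) (e f : Fin n → M)
    (he : ∀ i, d (e i) = 0) (hf : ∀ i, d (f i) = 0) :
    ∀ (j : ℕ) (x : ExteriorAlgebra ℝ M), D d (om e f ^ j * x) = om e f ^ j * D d x
  | 0, x => by simp
  | (j+1), x => by
    rw [pow_succ', mul_assoc, D_om_mul d e f he hf, D_om_pow_mul d e f he hf j,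
      ← mul_assoc, ← pow_succ']

lemma pow_split {B : Type*} [Ring B] [Algebra ℝ B] {x y : B} (hc : Commute x y)
    (hy : y * y = 0) : ∀ (j : ℕ), (x + y) ^ (j + 1) = x ^ (j + 1) + ((j:ℝ) + 1) • (x ^ j * y)
  | 0 => by simp
  | (j+1) => by
    have h1 : y * x ^ (j+1) = x ^ (j+1) * y := ((hc.symm).pow_right (j+1)).eq
    have h2 : y * (x ^ j * y) = 0 := by
      rw [← mul_assoc, (hc.symm.pow_right j).eq, mul_assoc, hy, mul_zero]
    rw [pow_succ' (x + y), pow_split hc hy j, mul_add, add_mul, add_mul, mul_smul_comm,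
      mul_smul_comm, h1, h2, smul_zero, add_zero, ← mul_assoc x (x ^ j) y, ← pow_succ',
      ← pow_succ']
    push_cast
    module

end HL
set_option linter.unusedSectionVars false

namespace HL

variable {M : Type} [AddCommGroup M] [Module ℝ M]

section Step

variable {n : ℕ} (e f : Fin (n + 1) → M) (ε φ : Fin (n + 1) → Module.Dual ℝ M)

/-- the projection killing the last pair -/
noncomputable def pmap : M →ₗ[ℝ] M :=
  LinearMap.id - (ε (Fin.last n)).smulRight (e (Fin.last n))
    - (φ (Fin.last n)).smulRight (f (Fin.last n))

lemma pmap_apply (v : M) :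
    pmap e f ε φ v
      = v - ε (Fin.last n) v • e (Fin.last n) - φ (Fin.last n) v • f (Fin.last n) := rfl

variable (Hee : ∀ i j, ε i (e j) = if i = j then 1 else 0)
variable (Hef : ∀ i j, ε i (f j) = 0)
variable (Hfe : ∀ i j, φ i (e j) = 0)
variable (Hff : ∀ i j, φ i (f j) = if i = j then 1 else 0)

include Hee Hef Hfe Hff

lemma pmap_eL : pmap e f ε φ (e (Fin.last n)) = 0 := by
  rw [pmap_apply, Hee, Hfe, if_pos rfl, one_smul, zero_smul, sub_zero, sub_self]

lemma pmap_fL : pmap e f ε φ (f (Fin.last n)) = 0 := by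
  rw [pmap_apply, Hef, Hff, if_pos rfl, one_smul, zero_smul, sub_zero, sub_self]

lemma pmap_e' (i : Fin n) :
    pmap e f ε φ (e (Fin.castSucc i)) = e (Fin.castSucc i) := by
  rw [pmap_apply, Hee, Hfe, if_neg (Fin.castSucc_lt_last i).ne', zero_smul, zero_smul,
    sub_zero, sub_zero]

lemma pmap_f' (i : Fin n) :
    pmap e f ε φ (f (Fin.castSucc i)) = f (Fin.castSucc i) := by
  rw [pmap_apply, Hef, Hff, if_neg (Fin.castSucc_lt_last i).ne', zero_smul, zero_smul,
    sub_zero, sub_zero]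

lemma Vmaps :
    Vsp e f ≤ (Vsp (fun i => e (Fin.castSucc i)) (fun i => f (Fin.castSucc i))).comap
      (pmap e f ε φ) := by
  rw [Vsp, Submodule.span_le]
  rintro _ (⟨j, rfl⟩ | ⟨j, rfl⟩) <;>
    simp only [SetLike.mem_coe, Submodule.mem_comap] <;>
    refine Fin.lastCases ?_ ?_ j
  · rw [pmap_eL e f ε φ Hee Hef Hfe Hff]; exact Submodule.zero_mem _
  · intro i
    rw [pmap_e' e f ε φ Hee Hef Hfe Hff i]
    exact Submodule.subset_span (Or.inl ⟨i, rfl⟩)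
  · rw [pmap_fL e f ε φ Hee Hef Hfe Hff]; exact Submodule.zero_mem _
  · intro i
    rw [pmap_f' e f ε φ Hee Hef Hfe Hff i]
    exact Submodule.subset_span (Or.inr ⟨i, rfl⟩)

lemma recon_step (x : ExteriorAlgebra ℝ M) :
    x = map (pmap e f ε φ) x
      + ι ℝ (e (Fin.last n)) * map (pmap e f ε φ) (D (ε (Fin.last n)) x)
      + ι ℝ (f (Fin.last n)) * map (pmap e f ε φ) (D (φ (Fin.last n)) x)
      + ι ℝ (e (Fin.last n)) * ι ℝ (f (Fin.last n))
          * map (pmap e f ε φ) (D (φ (Fin.last n)) (D (ε (Fin.last n)) x)) := by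
  refine recon _ _ _ _ _ (fun m => ?_) x
  rw [pmap_apply]
  abel

lemma E_om' :
    map (pmap e f ε φ) (om (fun i => e (Fin.castSucc i)) (fun i => f (Fin.castSucc i)))
      = om (fun i => e (Fin.castSucc i)) (fun i => f (Fin.castSucc i)) := by
  rw [om, map_sum]
  refine Finset.sum_congr rfl fun i _ => ?_
  rw [map_mul, map_apply_ι, map_apply_ι, pmap_e' e f ε φ Hee Hef Hfe Hff i,
    pmap_f' e f ε φ Hee Hef Hfe Hff i]

lemma E_eL_mul (z : ExteriorAlgebra ℝ M) :
    map (pmap e f ε φ) (ι ℝ (e (Fin.last n)) * z) = 0 := by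
  rw [map_mul, map_apply_ι, pmap_eL e f ε φ Hee Hef Hfe Hff, map_zero, zero_mul]

lemma E_fL_mul (z : ExteriorAlgebra ℝ M) :
    map (pmap e f ε φ) (ι ℝ (f (Fin.last n)) * z) = 0 := by
  rw [map_mul, map_apply_ι, pmap_fL e f ε φ Hee Hef Hfe Hff, map_zero, zero_mul]

lemma eps_e' (i : Fin n) : ε (Fin.last n) (e (Fin.castSucc i)) = 0 := by
  rw [Hee, if_neg (Fin.castSucc_lt_last i).ne']

lemma eps_f' (i : Fin n) : ε (Fin.last n) (f (Fin.castSucc i)) = 0 := Hef _ _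

lemma phi_e' (i : Fin n) : φ (Fin.last n) (e (Fin.castSucc i)) = 0 := Hfe _ _

lemma phi_f' (i : Fin n) : φ (Fin.last n) (f (Fin.castSucc i)) = 0 := by
  rw [Hff, if_neg (Fin.castSucc_lt_last i).ne']

lemma D_eps_u (z : ExteriorAlgebra ℝ M) :
    D (ε (Fin.last n)) (ι ℝ (e (Fin.last n)) * ι ℝ (f (Fin.last n)) * z)
      = ι ℝ (f (Fin.last n)) * z
        + ι ℝ (e (Fin.last n)) * ι ℝ (f (Fin.last n)) * D (ε (Fin.last n)) z := by
  rw [mul_assoc, D_ι_mul, Hee, if_pos rfl, one_smul, D_ι_mul, Hef, zero_smul, zero_sub,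
    mul_neg, sub_neg_eq_add, mul_assoc]

lemma D_phi_u (z : ExteriorAlgebra ℝ M) :
    D (φ (Fin.last n)) (ι ℝ (e (Fin.last n)) * ι ℝ (f (Fin.last n)) * z)
      = -(ι ℝ (e (Fin.last n)) * z)
        + ι ℝ (e (Fin.last n)) * ι ℝ (f (Fin.last n)) * D (φ (Fin.last n)) z := by
  rw [mul_assoc, D_ι_mul, Hfe, zero_smul, zero_sub, D_ι_mul, Hff, if_pos rfl, one_smul,
    mul_sub, neg_sub, mul_assoc]
  abel

lemma D_phi_fL (z : ExteriorAlgebra ℝ M) :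
    D (φ (Fin.last n)) (ι ℝ (f (Fin.last n)) * z)
      = z - ι ℝ (f (Fin.last n)) * D (φ (Fin.last n)) z := by
  rw [D_ι_mul, Hff, if_pos rfl, one_smul]

end Step

lemma u_ann_e (a b : M) (z : ExteriorAlgebra ℝ M) :
    ι ℝ a * ι ℝ b * (ι ℝ a * z) = 0 := by
  rw [mul_assoc, ι_swap b a, mul_neg, ι_sq, neg_zero]

lemma u_ann_f (a b : M) (z : ExteriorAlgebra ℝ M) :
    ι ℝ a * ι ℝ b * (ι ℝ b * z) = 0 := by
  rw [mul_assoc, ι_sq, mul_zero]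

lemma pair_sq (a b : M) (z : ExteriorAlgebra ℝ M) :
    ι ℝ a * ι ℝ b * (ι ℝ a * ι ℝ b * z) = 0 := by
  rw [mul_assoc (ι ℝ a) (ι ℝ b) z]
  exact u_ann_e a b (ι ℝ b * z)

lemma om_mem_sq {n : ℕ} (e f : Fin n → M) : om e f ∈ W e f ^ 2 := by
  rw [om]
  refine Submodule.sum_mem _ fun i _ => ?_
  rw [sq]
  exact Submodule.mul_mem_mul (ιe_mem_W e f i) (ιf_mem_W e f i)

lemma om_split {n : ℕ} (e f : Fin (n + 1) → M) :
    om e f = om (fun i => e (Fin.castSucc i)) (fun i => f (Fin.castSucc i))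
      + ι ℝ (e (Fin.last n)) * ι ℝ (f (Fin.last n)) := by
  rw [om, Fin.sum_univ_castSucc, om]

lemma W_mono {n : ℕ} (e f : Fin (n + 1) → M) :
    W (fun i => e (Fin.castSucc i)) (fun i => f (Fin.castSucc i)) ≤ W e f := by
  refine Submodule.map_mono (Submodule.span_mono ?_)
  rintro _ (⟨i, rfl⟩ | ⟨i, rfl⟩)
  · exact Or.inl ⟨Fin.castSucc i, rfl⟩
  · exact Or.inr ⟨Fin.castSucc i, rfl⟩

end HL
namespace HL

variable {M : Type} [AddCommGroup M] [Module ℝ M]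

theorem master_vanish : ∀ (n : ℕ) (e f : Fin n → M) (ε φ : Fin n → Module.Dual ℝ M),
    (∀ i j, ε i (e j) = if i = j then 1 else 0) →
    (∀ i j, ε i (f j) = 0) →
    (∀ i j, φ i (e j) = 0) →
    (∀ i j, φ i (f j) = if i = j then 1 else 0) →
    ∀ m : ℕ, 2 * n < m → ∀ x ∈ W e f ^ m, x = 0 := by
  intro n
  induction n with
  | zero =>
    intro e f ε φ _ _ _ _ m hm x hx
    have hW : W e f = ⊥ := by
      rw [W, Vsp]
      have h0 : (Set.range e ∪ Set.range f) = (∅ : Set M) := by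
        simp [Set.range_eq_empty]
      rw [h0, Submodule.span_empty, Submodule.map_bot]
    obtain ⟨m', rfl⟩ : ∃ m', m = m' + 1 := ⟨m - 1, by omega⟩
    rw [hW, pow_succ, Submodule.mul_bot] at hx
    simpa using hx
  | succ n IH =>
    intro e f ε φ Hee Hef Hfe Hff m hm x hx
    have hVm : ∀ v ∈ Vsp e f, pmap e f ε φ v ∈
        Vsp (fun i => e (Fin.castSucc i)) (fun i => f (Fin.castSucc i)) :=
      fun v hv => Vmaps e f ε φ Hee Hef Hfe Hff hv
    have Hee' : ∀ i j : Fin n, ε (Fin.castSucc i) (e (Fin.castSucc j))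
        = if i = j then 1 else 0 := by
      intro i j; rw [Hee]; simp [Fin.castSucc_inj]
    have Hff' : ∀ i j : Fin n, φ (Fin.castSucc i) (f (Fin.castSucc j))
        = if i = j then 1 else 0 := by
      intro i j; rw [Hff]; simp [Fin.castSucc_inj]
    have ha : map (pmap e f ε φ) x ∈
        W (fun i => e (Fin.castSucc i)) (fun i => f (Fin.castSucc i)) ^ m :=
      map_pow_mem _ hVm m x hx
    have hb : map (pmap e f ε φ) (D (ε (Fin.last n)) x) ∈
        W (fun i => e (Fin.castSucc i)) (fun i => f (Fin.castSucc i)) ^ (m - 1) :=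
      map_pow_mem _ hVm _ _ (D_pow_mem _ m x hx)
    have hc : map (pmap e f ε φ) (D (φ (Fin.last n)) x) ∈
        W (fun i => e (Fin.castSucc i)) (fun i => f (Fin.castSucc i)) ^ (m - 1) :=
      map_pow_mem _ hVm _ _ (D_pow_mem _ m x hx)
    have hd : map (pmap e f ε φ) (D (φ (Fin.last n)) (D (ε (Fin.last n)) x)) ∈
        W (fun i => e (Fin.castSucc i)) (fun i => f (Fin.castSucc i)) ^ (m - 1 - 1) :=
      map_pow_mem _ hVm _ _ (D_pow_mem _ (m - 1) _ (D_pow_mem _ m x hx))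
    have za := IH _ _ _ _ Hee' (fun i j => Hef _ _) (fun i j => Hfe _ _) Hff'
      m (by omega) _ ha
    have zb := IH _ _ _ _ Hee' (fun i j => Hef _ _) (fun i j => Hfe _ _) Hff'
      (m - 1) (by omega) _ hb
    have zc := IH _ _ _ _ Hee' (fun i j => Hef _ _) (fun i j => Hfe _ _) Hff'
      (m - 1) (by omega) _ hc
    have zd := IH _ _ _ _ Hee' (fun i j => Hef _ _) (fun i j => Hfe _ _) Hff'
      (m - 1 - 1) (by omega) _ hd
    have hr := recon_step e f ε φ Hee Hef Hfe Hff x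
    rw [za, zb, zc, zd, mul_zero, mul_zero, mul_zero] at hr
    simpa using hr

end HL
namespace HL

variable {M : Type} [AddCommGroup M] [Module ℝ M]

section Step2

variable {n : ℕ} (e f : Fin (n + 1) → M) (ε φ : Fin (n + 1) → Module.Dual ℝ M)
variable (Hee : ∀ i j, ε i (e j) = if i = j then 1 else 0)
variable (Hef : ∀ i j, ε i (f j) = 0)
variable (Hfe : ∀ i j, φ i (e j) = 0)
variable (Hff : ∀ i j, φ i (f j) = if i = j then 1 else 0)

include Hee Hef Hfe Hff

lemma step_eqs (j : ℕ) (x : ExteriorAlgebra ℝ M) (hom : om e f ^ (j + 1) * x = 0) :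
    om (fun i => e (Fin.castSucc i)) (fun i => f (Fin.castSucc i)) ^ (j + 1)
        * map (pmap e f ε φ) x = 0 ∧
    om (fun i => e (Fin.castSucc i)) (fun i => f (Fin.castSucc i)) ^ (j + 1)
        * map (pmap e f ε φ) (D (ε (Fin.last n)) x) = 0 ∧
    om (fun i => e (Fin.castSucc i)) (fun i => f (Fin.castSucc i)) ^ (j + 1)
        * map (pmap e f ε φ) (D (φ (Fin.last n)) x) = 0 ∧
    om (fun i => e (Fin.castSucc i)) (fun i => f (Fin.castSucc i)) ^ (j + 1)
        * map (pmap e f ε φ) (D (φ (Fin.last n)) (D (ε (Fin.last n)) x))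
      + ((j : ℝ) + 1) • (om (fun i => e (Fin.castSucc i)) (fun i => f (Fin.castSucc i)) ^ j
        * map (pmap e f ε φ) x) = 0 := by
  have huu : ι ℝ (e (Fin.last n)) * ι ℝ (f (Fin.last n))
      * (ι ℝ (e (Fin.last n)) * ι ℝ (f (Fin.last n))) = 0 := by
    have := pair_sq (e (Fin.last n)) (f (Fin.last n)) (1 : ExteriorAlgebra ℝ M)
    rwa [mul_one] at this
  have hcomm : Commute
      (om (fun i => e (Fin.castSucc i)) (fun i => f (Fin.castSucc i)))
      (ι ℝ (e (Fin.last n)) * ι ℝ (f (Fin.last n))) :=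
    (commute_pair_om (e (Fin.last n)) (f (Fin.last n)) _ _).symm
  have key0 : om (fun i => e (Fin.castSucc i)) (fun i => f (Fin.castSucc i)) ^ (j + 1) * x
      + ((j : ℝ) + 1) • (om (fun i => e (Fin.castSucc i)) (fun i => f (Fin.castSucc i)) ^ j
        * (ι ℝ (e (Fin.last n)) * ι ℝ (f (Fin.last n)) * x)) = 0 := by
    have hsp := pow_split hcomm huu j
    calc _ = (om (fun i => e (Fin.castSucc i)) (fun i => f (Fin.castSucc i)) ^ (j + 1)
          + ((j : ℝ) + 1) • (om (fun i => e (Fin.castSucc i)) (fun i => f (Fin.castSucc i)) ^ j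
            * (ι ℝ (e (Fin.last n)) * ι ℝ (f (Fin.last n))))) * x := by
          rw [add_mul, smul_mul_assoc,
            mul_assoc _ (ι ℝ (e (Fin.last n)) * ι ℝ (f (Fin.last n))) x]
      _ = (om (fun i => e (Fin.castSucc i)) (fun i => f (Fin.castSucc i))
            + ι ℝ (e (Fin.last n)) * ι ℝ (f (Fin.last n))) ^ (j + 1) * x := by rw [hsp]
      _ = om e f ^ (j + 1) * x := by rw [← om_split]
      _ = 0 := hom
  have appE : ∀ (k : ℕ) (z : ExteriorAlgebra ℝ M),
      map (pmap e f ε φ) (om (fun i => e (Fin.castSucc i)) (fun i => f (Fin.castSucc i)) ^ k * z)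
        = om (fun i => e (Fin.castSucc i)) (fun i => f (Fin.castSucc i)) ^ k
          * map (pmap e f ε φ) z := by
    intro k z
    rw [map_mul, map_pow, E_om' e f ε φ Hee Hef Hfe Hff]
  have appDe : ∀ (k : ℕ) (z : ExteriorAlgebra ℝ M),
      D (ε (Fin.last n)) (om (fun i => e (Fin.castSucc i)) (fun i => f (Fin.castSucc i)) ^ k * z)
        = om (fun i => e (Fin.castSucc i)) (fun i => f (Fin.castSucc i)) ^ k
          * D (ε (Fin.last n)) z :=
    fun k z => D_om_pow_mul _ _ _ (eps_e' e f ε φ Hee Hef Hfe Hff)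
      (eps_f' e f ε φ Hee Hef Hfe Hff) k z
  have appDf : ∀ (k : ℕ) (z : ExteriorAlgebra ℝ M),
      D (φ (Fin.last n)) (om (fun i => e (Fin.castSucc i)) (fun i => f (Fin.castSucc i)) ^ k * z)
        = om (fun i => e (Fin.castSucc i)) (fun i => f (Fin.castSucc i)) ^ k
          * D (φ (Fin.last n)) z :=
    fun k z => D_om_pow_mul _ _ _ (phi_e' e f ε φ Hee Hef Hfe Hff)
      (phi_f' e f ε φ Hee Hef Hfe Hff) k z
  -- first component
  have key1 : om (fun i => e (Fin.castSucc i)) (fun i => f (Fin.castSucc i)) ^ (j + 1)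
      * map (pmap e f ε φ) x = 0 := by
    have h := congrArg (map (pmap e f ε φ)) key0
    rwa [map_zero, map_add, map_smul, appE, appE,
      mul_assoc (ι ℝ (e (Fin.last n))) (ι ℝ (f (Fin.last n))) x,
      E_eL_mul e f ε φ Hee Hef Hfe Hff, mul_zero, smul_zero, add_zero] at h
  -- the ε-contracted equation
  have keyeps : om (fun i => e (Fin.castSucc i)) (fun i => f (Fin.castSucc i)) ^ (j + 1)
      * D (ε (Fin.last n)) x
      + ((j : ℝ) + 1) • (om (fun i => e (Fin.castSucc i)) (fun i => f (Fin.castSucc i)) ^ j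
        * (ι ℝ (f (Fin.last n)) * x
          + ι ℝ (e (Fin.last n)) * ι ℝ (f (Fin.last n)) * D (ε (Fin.last n)) x)) = 0 := by
    have h := congrArg (D (ε (Fin.last n))) key0
    rwa [map_zero, map_add, map_smul, appDe, appDe,
      D_eps_u e f ε φ Hee Hef Hfe Hff] at h
  have key2 : om (fun i => e (Fin.castSucc i)) (fun i => f (Fin.castSucc i)) ^ (j + 1)
      * map (pmap e f ε φ) (D (ε (Fin.last n)) x) = 0 := by
    have h := congrArg (map (pmap e f ε φ)) keyeps
    rwa [map_zero, map_add, map_smul, appE, appE, map_add,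
      E_fL_mul e f ε φ Hee Hef Hfe Hff,
      mul_assoc (ι ℝ (e (Fin.last n))) (ι ℝ (f (Fin.last n))) (D (ε (Fin.last n)) x),
      E_eL_mul e f ε φ Hee Hef Hfe Hff, add_zero, mul_zero, smul_zero, add_zero] at h
  -- the φ-contracted equation
  have key3 : om (fun i => e (Fin.castSucc i)) (fun i => f (Fin.castSucc i)) ^ (j + 1)
      * map (pmap e f ε φ) (D (φ (Fin.last n)) x) = 0 := by
    have h := congrArg (D (φ (Fin.last n))) key0
    rw [map_zero, map_add, map_smul, appDf, appDf,
      D_phi_u e f ε φ Hee Hef Hfe Hff] at h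
    have h2 := congrArg (map (pmap e f ε φ)) h
    rwa [map_zero, map_add, map_smul, appE, appE, map_add, map_neg,
      E_eL_mul e f ε φ Hee Hef Hfe Hff, neg_zero, zero_add,
      mul_assoc (ι ℝ (e (Fin.last n))) (ι ℝ (f (Fin.last n))) (D (φ (Fin.last n)) x),
      E_eL_mul e f ε φ Hee Hef Hfe Hff, mul_zero, smul_zero, add_zero] at h2
  -- the doubly contracted equation
  have key4 : om (fun i => e (Fin.castSucc i)) (fun i => f (Fin.castSucc i)) ^ (j + 1)
      * map (pmap e f ε φ) (D (φ (Fin.last n)) (D (ε (Fin.last n)) x))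
      + ((j : ℝ) + 1) • (om (fun i => e (Fin.castSucc i)) (fun i => f (Fin.castSucc i)) ^ j
        * map (pmap e f ε φ) x) = 0 := by
    have h := congrArg (D (φ (Fin.last n))) keyeps
    rw [map_zero, map_add, map_smul, appDf, appDf, map_add,
      D_phi_fL e f ε φ Hee Hef Hfe Hff,
      D_phi_u e f ε φ Hee Hef Hfe Hff] at h
    have h2 := congrArg (map (pmap e f ε φ)) h
    rwa [map_zero, map_add, map_smul, appE, appE, map_add, map_sub, map_add, map_neg,
      E_fL_mul e f ε φ Hee Hef Hfe Hff,
      mul_assoc (ι ℝ (e (Fin.last n))) (ι ℝ (f (Fin.last n)))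
        (D (φ (Fin.last n)) (D (ε (Fin.last n)) x)),
      E_eL_mul e f ε φ Hee Hef Hfe Hff,
      E_eL_mul e f ε φ Hee Hef Hfe Hff,
      sub_zero, neg_zero, zero_add, add_zero] at h2
  exact ⟨key1, key2, key3, key4⟩

end Step2

end HL
namespace HL

variable {M : Type} [AddCommGroup M] [Module ℝ M]

theorem master_inj : ∀ (n : ℕ) (e f : Fin n → M) (ε φ : Fin n → Module.Dual ℝ M),
    (∀ i j, ε i (e j) = if i = j then 1 else 0) →
    (∀ i j, ε i (f j) = 0) →
    (∀ i j, φ i (e j) = 0) →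
    (∀ i j, φ i (f j) = if i = j then 1 else 0) →
    ∀ (h j : ℕ), h + j ≤ n → ∀ x ∈ W e f ^ h, om e f ^ j * x = 0 → x = 0 := by
  intro n
  induction n with
  | zero =>
    intro e f ε φ _ _ _ _ h j hhj x hx hom
    obtain rfl : j = 0 := by omega
    rwa [pow_zero, one_mul] at hom
  | succ n IH =>
    intro e f ε φ Hee Hef Hfe Hff h j hhj x hx hom
    rcases Nat.eq_zero_or_pos j with rfl | hj
    · rwa [pow_zero, one_mul] at hom
    obtain ⟨j', rfl⟩ : ∃ j'', j = j'' + 1 := ⟨j - 1, by omega⟩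
    obtain ⟨k1, k2, k3, k4⟩ := step_eqs e f ε φ Hee Hef Hfe Hff j' x hom
    have hVm : ∀ v ∈ Vsp e f, pmap e f ε φ v ∈
        Vsp (fun i => e (Fin.castSucc i)) (fun i => f (Fin.castSucc i)) :=
      fun v hv => Vmaps e f ε φ Hee Hef Hfe Hff hv
    have Hee' : ∀ i j : Fin n, ε (Fin.castSucc i) (e (Fin.castSucc j))
        = if i = j then 1 else 0 := by
      intro i j; rw [Hee]; simp [Fin.castSucc_inj]
    have Hff' : ∀ i j : Fin n, φ (Fin.castSucc i) (f (Fin.castSucc j))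
        = if i = j then 1 else 0 := by
      intro i j; rw [Hff]; simp [Fin.castSucc_inj]
    have IH' := IH _ _ _ _ Hee' (fun i j => Hef _ _) (fun i j => Hfe _ _) Hff'
    have ha : map (pmap e f ε φ) x ∈
        W (fun i => e (Fin.castSucc i)) (fun i => f (Fin.castSucc i)) ^ h :=
      map_pow_mem _ hVm h x hx
    have hb : map (pmap e f ε φ) (D (ε (Fin.last n)) x) ∈
        W (fun i => e (Fin.castSucc i)) (fun i => f (Fin.castSucc i)) ^ (h - 1) :=
      map_pow_mem _ hVm _ _ (D_pow_mem _ h x hx)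
    have hc : map (pmap e f ε φ) (D (φ (Fin.last n)) x) ∈
        W (fun i => e (Fin.castSucc i)) (fun i => f (Fin.castSucc i)) ^ (h - 1) :=
      map_pow_mem _ hVm _ _ (D_pow_mem _ h x hx)
    have hd : map (pmap e f ε φ) (D (φ (Fin.last n)) (D (ε (Fin.last n)) x)) ∈
        W (fun i => e (Fin.castSucc i)) (fun i => f (Fin.castSucc i)) ^ (h - 1 - 1) :=
      map_pow_mem _ hVm _ _ (D_pow_mem _ (h - 1) _ (D_pow_mem _ h x hx))
    have hcoef : ((j' : ℝ) + 1) ≠ 0 := by positivity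
    -- we show all four components vanish
    have hfinal : map (pmap e f ε φ) x = 0 ∧
        map (pmap e f ε φ) (D (ε (Fin.last n)) x) = 0 ∧
        map (pmap e f ε φ) (D (φ (Fin.last n)) x) = 0 ∧
        map (pmap e f ε φ) (D (φ (Fin.last n)) (D (ε (Fin.last n)) x)) = 0 := by
      rcases Nat.lt_or_ge h 2 with hlt | hge
      · -- low-degree case : the double contraction vanishes outright
        have hdd : D (φ (Fin.last n)) (D (ε (Fin.last n)) x) = 0 := by
          rcases (by omega : h = 0 ∨ h = 1) with rfl | rfl
          · have hDe : D (ε (Fin.last n)) x = 0 :=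
              D_mem_one _ (by rwa [pow_zero] at hx)
            rw [hDe, map_zero]
          · have h0 : D (ε (Fin.last n)) x ∈
                ((Vsp e f).map (ι ℝ) : Submodule ℝ (ExteriorAlgebra ℝ M)) ^ 0 :=
              D_pow_mem _ 1 x hx
            rw [pow_zero] at h0
            exact D_mem_one _ h0
        have hd0 : map (pmap e f ε φ) (D (φ (Fin.last n)) (D (ε (Fin.last n)) x)) = 0 := by
          rw [hdd, map_zero]
        have ha0 : map (pmap e f ε φ) x = 0 := by
          rw [hd0, mul_zero, zero_add] at k4
          have h5 := (smul_eq_zero.mp k4).resolve_left hcoef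
          exact IH' h j' (by omega) _ ha h5
        have hb0 : map (pmap e f ε φ) (D (ε (Fin.last n)) x) = 0 := by
          rcases (by omega : h = 0 ∨ h = 1) with rfl | rfl
          · have hDe : D (ε (Fin.last n)) x = 0 :=
              D_mem_one _ (by rwa [pow_zero] at hx)
            rw [hDe, map_zero]
          · exact IH' 0 (j' + 1) (by omega) _ hb k2
        have hc0 : map (pmap e f ε φ) (D (φ (Fin.last n)) x) = 0 := by
          rcases (by omega : h = 0 ∨ h = 1) with rfl | rfl
          · have hDf : D (φ (Fin.last n)) x = 0 :=
              D_mem_one _ (by rwa [pow_zero] at hx)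
            rw [hDf, map_zero]
          · exact IH' 0 (j' + 1) (by omega) _ hc k3
        exact ⟨ha0, hb0, hc0, hd0⟩
      · -- high-degree case
        obtain ⟨h2, rfl⟩ : ∃ h2, h = h2 + 2 := ⟨h - 2, by omega⟩
        have hdexp : h2 + 2 - 1 - 1 = h2 := by omega
        rw [hdexp] at hd
        have hbexp : h2 + 2 - 1 = h2 + 1 := by omega
        rw [hbexp] at hb hc
        have hmem : om (fun i => e (Fin.castSucc i)) (fun i => f (Fin.castSucc i))
              * map (pmap e f ε φ) (D (φ (Fin.last n)) (D (ε (Fin.last n)) x))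
            + ((j' : ℝ) + 1) • map (pmap e f ε φ) x ∈
            W (fun i => e (Fin.castSucc i)) (fun i => f (Fin.castSucc i)) ^ (h2 + 2) := by
          refine Submodule.add_mem _ ?_ (Submodule.smul_mem _ _ ha)
          have := Submodule.mul_mem_mul (om_mem_sq
            (fun i => e (Fin.castSucc i)) (fun i => f (Fin.castSucc i))) hd
          rwa [← pow_add, Nat.add_comm 2 h2] at this
        have k4' : om (fun i => e (Fin.castSucc i)) (fun i => f (Fin.castSucc i)) ^ j'
            * (om (fun i => e (Fin.castSucc i)) (fun i => f (Fin.castSucc i))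
                * map (pmap e f ε φ) (D (φ (Fin.last n)) (D (ε (Fin.last n)) x))
              + ((j' : ℝ) + 1) • map (pmap e f ε φ) x) = 0 := by
          rw [mul_add, mul_smul_comm, ← mul_assoc, ← pow_succ]
          exact k4
        have hz := IH' (h2 + 2) j' (by omega) _ hmem k4'
        have had : ((j' : ℝ) + 1) • map (pmap e f ε φ) x
            = -(om (fun i => e (Fin.castSucc i)) (fun i => f (Fin.castSucc i))
                * map (pmap e f ε φ) (D (φ (Fin.last n)) (D (ε (Fin.last n)) x))) :=
          eq_neg_of_add_eq_zero_right hz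
        have hdeq : om (fun i => e (Fin.castSucc i)) (fun i => f (Fin.castSucc i)) ^ (j' + 2)
            * map (pmap e f ε φ) (D (φ (Fin.last n)) (D (ε (Fin.last n)) x)) = 0 := by
          have h6 := congrArg (fun z =>
            om (fun i => e (Fin.castSucc i)) (fun i => f (Fin.castSucc i)) ^ (j' + 1) * z) had
          rw [mul_smul_comm, k1, smul_zero, mul_neg, ← mul_assoc, ← pow_succ] at h6
          exact (neg_eq_zero.mp h6.symm)
        have hd0 : map (pmap e f ε φ) (D (φ (Fin.last n)) (D (ε (Fin.last n)) x)) = 0 :=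
          IH' h2 (j' + 2) (by omega) _ hd hdeq
        have ha0 : map (pmap e f ε φ) x = 0 := by
          rw [hd0, mul_zero, neg_zero] at had
          exact (smul_eq_zero.mp had).resolve_left hcoef
        have hb0 : map (pmap e f ε φ) (D (ε (Fin.last n)) x) = 0 :=
          IH' (h2 + 1) (j' + 1) (by omega) _ hb k2
        have hc0 : map (pmap e f ε φ) (D (φ (Fin.last n)) x) = 0 :=
          IH' (h2 + 1) (j' + 1) (by omega) _ hc k3
        exact ⟨ha0, hb0, hc0, hd0⟩
    obtain ⟨ha0, hb0, hc0, hd0⟩ := hfinal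
    have hr := recon_step e f ε φ Hee Hef Hfe Hff x
    rw [ha0, hb0, hc0, hd0, mul_zero, mul_zero, mul_zero] at hr
    simpa using hr

end HL
namespace HL

variable {M : Type} [AddCommGroup M] [Module ℝ M]

lemma mem_mul_pow {P : Submodule ℝ (ExteriorAlgebra ℝ M)} {g z : ExteriorAlgebra ℝ M}
    (hg : g ∈ P) {k : ℕ} (hz : z ∈ P ^ k) : g * z ∈ P ^ (k + 1) := by
  rw [pow_succ']
  exact Submodule.mul_mem_mul hg hz

lemma one_mem_pow_zero {P : Submodule ℝ (ExteriorAlgebra ℝ M)} :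
    (1 : ExteriorAlgebra ℝ M) ∈ P ^ 0 := by
  rw [pow_zero]
  exact Submodule.mem_one.mpr ⟨1, (algebraMap ℝ (ExteriorAlgebra ℝ M)).map_one⟩

lemma om_pow_mem {n : ℕ} (e f : Fin n → M) (k : ℕ) : om e f ^ k ∈ W e f ^ (2 * k) := by
  induction k with
  | zero => simpa [pow_zero] using (one_mem_pow_zero (P := W e f))
  | succ k ih =>
    have := Submodule.mul_mem_mul ih (om_mem_sq e f)
    rw [← pow_add] at this
    have hexp : 2 * k + 2 = 2 * (k + 1) := by omega
    rw [hexp] at this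
    rwa [pow_succ]

section Step3

variable {n : ℕ} (e f : Fin (n + 1) → M)

lemma om_pow_form (j : ℕ) (a b c d : ExteriorAlgebra ℝ M) :
    om e f ^ (j + 1) * (a + ι ℝ (e (Fin.last n)) * b + ι ℝ (f (Fin.last n)) * c
        + ι ℝ (e (Fin.last n)) * ι ℝ (f (Fin.last n)) * d)
      = om (fun i => e (Fin.castSucc i)) (fun i => f (Fin.castSucc i)) ^ (j + 1) * a
        + ι ℝ (e (Fin.last n))
          * (om (fun i => e (Fin.castSucc i)) (fun i => f (Fin.castSucc i)) ^ (j + 1) * b)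
        + ι ℝ (f (Fin.last n))
          * (om (fun i => e (Fin.castSucc i)) (fun i => f (Fin.castSucc i)) ^ (j + 1) * c)
        + ι ℝ (e (Fin.last n)) * ι ℝ (f (Fin.last n))
          * (om (fun i => e (Fin.castSucc i)) (fun i => f (Fin.castSucc i)) ^ (j + 1) * d
            + ((j : ℝ) + 1)
              • (om (fun i => e (Fin.castSucc i)) (fun i => f (Fin.castSucc i)) ^ j * a)) := by
  have huu : ι ℝ (e (Fin.last n)) * ι ℝ (f (Fin.last n))
      * (ι ℝ (e (Fin.last n)) * ι ℝ (f (Fin.last n))) = 0 := by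
    have := pair_sq (e (Fin.last n)) (f (Fin.last n)) (1 : ExteriorAlgebra ℝ M)
    rwa [mul_one] at this
  have hcomm : Commute
      (om (fun i => e (Fin.castSucc i)) (fun i => f (Fin.castSucc i)))
      (ι ℝ (e (Fin.last n)) * ι ℝ (f (Fin.last n))) :=
    (commute_pair_om (e (Fin.last n)) (f (Fin.last n)) _ _).symm
  rw [om_split e f, pow_split hcomm huu j]
  simp only [add_mul, smul_mul_assoc, mul_add]
  rw [ompow_ι _ _ (j + 1) (e (Fin.last n)) b, ompow_ι _ _ (j + 1) (f (Fin.last n)) c,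
    ompow_pair _ _ (j + 1) (e (Fin.last n)) (f (Fin.last n)) d]
  rw [mul_assoc (om (fun i => e (Fin.castSucc i)) (fun i => f (Fin.castSucc i)) ^ j)
    (ι ℝ (e (Fin.last n)) * ι ℝ (f (Fin.last n))) a]
  rw [mul_assoc (om (fun i => e (Fin.castSucc i)) (fun i => f (Fin.castSucc i)) ^ j)
    (ι ℝ (e (Fin.last n)) * ι ℝ (f (Fin.last n))) (ι ℝ (e (Fin.last n)) * b)]
  rw [mul_assoc (om (fun i => e (Fin.castSucc i)) (fun i => f (Fin.castSucc i)) ^ j)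
    (ι ℝ (e (Fin.last n)) * ι ℝ (f (Fin.last n))) (ι ℝ (f (Fin.last n)) * c)]
  rw [mul_assoc (om (fun i => e (Fin.castSucc i)) (fun i => f (Fin.castSucc i)) ^ j)
    (ι ℝ (e (Fin.last n)) * ι ℝ (f (Fin.last n)))
    (ι ℝ (e (Fin.last n)) * ι ℝ (f (Fin.last n)) * d)]
  rw [u_ann_e (e (Fin.last n)) (f (Fin.last n)) b, u_ann_f (e (Fin.last n)) (f (Fin.last n)) c,
    pair_sq (e (Fin.last n)) (f (Fin.last n)) d]
  rw [ompow_pair _ _ j (e (Fin.last n)) (f (Fin.last n)) a]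
  simp only [mul_zero, smul_zero, add_zero, mul_smul_comm]
  abel

end Step3

end HL
namespace HL

variable {M : Type} [AddCommGroup M] [Module ℝ M]

lemma om_pow_split {n : ℕ} (e f : Fin (n + 1) → M) (j : ℕ) :
    om e f ^ (j + 1)
      = om (fun i => e (Fin.castSucc i)) (fun i => f (Fin.castSucc i)) ^ (j + 1)
        + ((j : ℝ) + 1) • (om (fun i => e (Fin.castSucc i)) (fun i => f (Fin.castSucc i)) ^ j
          * (ι ℝ (e (Fin.last n)) * ι ℝ (f (Fin.last n)))) := by
  have huu : ι ℝ (e (Fin.last n)) * ι ℝ (f (Fin.last n))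
      * (ι ℝ (e (Fin.last n)) * ι ℝ (f (Fin.last n))) = 0 := by
    have := pair_sq (e (Fin.last n)) (f (Fin.last n)) (1 : ExteriorAlgebra ℝ M)
    rwa [mul_one] at this
  have hcomm : Commute
      (om (fun i => e (Fin.castSucc i)) (fun i => f (Fin.castSucc i)))
      (ι ℝ (e (Fin.last n)) * ι ℝ (f (Fin.last n))) :=
    (commute_pair_om (e (Fin.last n)) (f (Fin.last n)) _ _).symm
  rw [om_split e f, pow_split hcomm huu j]

theorem master_surj : ∀ (n : ℕ) (e f : Fin n → M) (ε φ : Fin n → Module.Dual ℝ M),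
    (∀ i j, ε i (e j) = if i = j then 1 else 0) →
    (∀ i j, ε i (f j) = 0) →
    (∀ i j, φ i (e j) = 0) →
    (∀ i j, φ i (f j) = if i = j then 1 else 0) →
    ∀ h : ℕ, h ≤ n → ∀ y ∈ W e f ^ (2 * n - h),
      ∃ x, x ∈ W e f ^ h ∧ om e f ^ (n - h) * x = y := by
  intro n
  induction n with
  | zero =>
    intro e f ε φ _ _ _ _ h hle y hy
    obtain rfl : h = 0 := by omega
    exact ⟨y, by simpa using hy, by rw [Nat.sub_zero, pow_zero, one_mul]⟩
  | succ n IH =>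
    intro e f ε φ Hee Hef Hfe Hff h hle y hy
    rcases eq_or_lt_of_le hle with rfl | hlt
    · -- top degree : identity
      refine ⟨y, ?_, ?_⟩
      · rwa [show 2 * (n + 1) - (n + 1) = n + 1 by omega] at hy
      · rw [Nat.sub_self, pow_zero, one_mul]
    have hlen : h ≤ n := by omega
    have hVm : ∀ v ∈ Vsp e f, pmap e f ε φ v ∈
        Vsp (fun i => e (Fin.castSucc i)) (fun i => f (Fin.castSucc i)) :=
      fun v hv => Vmaps e f ε φ Hee Hef Hfe Hff hv
    have Hee' : ∀ i j : Fin n, ε (Fin.castSucc i) (e (Fin.castSucc j))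
        = if i = j then 1 else 0 := by
      intro i j; rw [Hee]; simp [Fin.castSucc_inj]
    have Hff' : ∀ i j : Fin n, φ (Fin.castSucc i) (f (Fin.castSucc j))
        = if i = j then 1 else 0 := by
      intro i j; rw [Hff]; simp [Fin.castSucc_inj]
    have IH' := IH _ _ _ _ Hee' (fun i j => Hef _ _) (fun i j => Hfe _ _) Hff'
    have V' := master_vanish n _ _ _ _ Hee' (fun i j => Hef _ _) (fun i j => Hfe _ _) Hff'
    have hr := recon_step e f ε φ Hee Hef Hfe Hff y
    have hpa : map (pmap e f ε φ) y ∈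
        W (fun i => e (Fin.castSucc i)) (fun i => f (Fin.castSucc i)) ^ (2 * (n + 1) - h) :=
      map_pow_mem _ hVm _ y hy
    have hpb : map (pmap e f ε φ) (D (ε (Fin.last n)) y) ∈
        W (fun i => e (Fin.castSucc i)) (fun i => f (Fin.castSucc i))
          ^ (2 * (n + 1) - h - 1) :=
      map_pow_mem _ hVm _ _ (D_pow_mem _ _ y hy)
    have hpc : map (pmap e f ε φ) (D (φ (Fin.last n)) y) ∈
        W (fun i => e (Fin.castSucc i)) (fun i => f (Fin.castSucc i))
          ^ (2 * (n + 1) - h - 1) :=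
      map_pow_mem _ hVm _ _ (D_pow_mem _ _ y hy)
    have hpd : map (pmap e f ε φ) (D (φ (Fin.last n)) (D (ε (Fin.last n)) y)) ∈
        W (fun i => e (Fin.castSucc i)) (fun i => f (Fin.castSucc i))
          ^ (2 * (n + 1) - h - 1 - 1) :=
      map_pow_mem _ hVm _ _ (D_pow_mem _ _ _ (D_pow_mem _ _ y hy))
    rcases (by omega : h = 0 ∨ h = 1 ∨ 2 ≤ h) with rfl | rfl | hge2
    · -- h = 0
      have ea : map (pmap e f ε φ) y = 0 := V' _ (by omega) _ hpa
      have eb : map (pmap e f ε φ) (D (ε (Fin.last n)) y) = 0 := V' _ (by omega) _ hpb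
      have ec : map (pmap e f ε φ) (D (φ (Fin.last n)) y) = 0 := V' _ (by omega) _ hpc
      rw [show 2 * (n + 1) - 0 - 1 - 1 = 2 * n - 0 by omega] at hpd
      obtain ⟨at0, hat0, heq0⟩ := IH' 0 (Nat.zero_le n) _ hpd
      obtain ⟨cc, hcc⟩ := Submodule.mem_one.mp (by rwa [pow_zero] at hat0)
      have hNne : ((n : ℝ) + 1) ≠ 0 := by positivity
      refine ⟨(cc / ((n : ℝ) + 1)) • 1, Submodule.smul_mem _ _ one_mem_pow_zero, ?_⟩
      rw [Nat.sub_zero, mul_smul_comm, mul_one, om_pow_split e f n]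
      have h0 : om (fun i => e (Fin.castSucc i)) (fun i => f (Fin.castSucc i)) ^ (n + 1)
          = 0 := V' _ (by omega) _ (om_pow_mem _ _ (n + 1))
      rw [h0, zero_add, smul_smul, div_mul_cancel₀ cc hNne]
      rw [hr, ea, eb, ec, mul_zero, mul_zero, zero_add, zero_add, zero_add]
      rw [← heq0, ← hcc, Nat.sub_zero]
      rw [Algebra.algebraMap_eq_smul_one, mul_smul_comm, mul_one, mul_smul_comm]
      rw [((commute_pair_om (e (Fin.last n)) (f (Fin.last n))
        (fun i => e (Fin.castSucc i)) (fun i => f (Fin.castSucc i))).symm.pow_left n).eq]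
    · -- h = 1
      obtain ⟨m, rfl⟩ : ∃ m, n = m + 1 := ⟨n - 1, by omega⟩
      have ea : map (pmap e f ε φ) y = 0 := V' _ (by omega) _ hpa
      rw [show 2 * (m + 1 + 1) - 1 - 1 = 2 * (m + 1) - 0 by omega] at hpb hpc
      obtain ⟨bt, hbt, heqb⟩ := IH' 0 (by omega) _ hpb
      rw [Nat.sub_zero] at heqb
      obtain ⟨ct, hct, heqc⟩ := IH' 0 (by omega) _ hpc
      rw [Nat.sub_zero] at heqc
      rw [show 2 * (m + 1 + 1) - 1 - 1 - 1 = 2 * (m + 1) - 1 by omega] at hpd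
      obtain ⟨z, hz, heqz⟩ := IH' 1 (by omega) _ hpd
      rw [Nat.add_sub_cancel] at heqz
      have hNne : ((m : ℝ) + 1) ≠ 0 := by positivity
      refine ⟨(1 / ((m : ℝ) + 1)) • z + ι ℝ (e (Fin.last (m + 1))) * bt
          + ι ℝ (f (Fin.last (m + 1))) * ct, ?_, ?_⟩
      · refine Submodule.add_mem _ (Submodule.add_mem _ ?_ ?_) ?_
        · exact Submodule.smul_mem _ _ (pow_mono (W_mono e f) 1 hz)
        · exact mem_mul_pow (ιe_mem_W e f (Fin.last (m + 1))) (pow_mono (W_mono e f) 0 hbt)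
        · exact mem_mul_pow (ιf_mem_W e f (Fin.last (m + 1))) (pow_mono (W_mono e f) 0 hct)
      · simp only [Nat.add_sub_cancel]
        have hform := om_pow_form e f m ((1 / ((m : ℝ) + 1)) • z) bt ct 0
        simp only [mul_zero, add_zero, zero_add] at hform
        rw [hform]
        have e1 : om (fun i => e (Fin.castSucc i)) (fun i => f (Fin.castSucc i)) ^ (m + 1)
            * ((1 / ((m : ℝ) + 1)) • z) = 0 := by
          rw [mul_smul_comm]
          have hmem : om (fun i => e (Fin.castSucc i)) (fun i => f (Fin.castSucc i)) ^ (m + 1)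
              * z ∈ W (fun i => e (Fin.castSucc i)) (fun i => f (Fin.castSucc i))
                ^ (2 * (m + 1) + 1) := by
            have := Submodule.mul_mem_mul (om_pow_mem
              (fun i => e (Fin.castSucc i)) (fun i => f (Fin.castSucc i)) (m + 1)) hz
            rwa [← pow_add] at this
          rw [V' _ (by omega) _ hmem, smul_zero]
        have e4 : ((m : ℝ) + 1) • (om (fun i => e (Fin.castSucc i))
              (fun i => f (Fin.castSucc i)) ^ m * ((1 / ((m : ℝ) + 1)) • z))
            = map (pmap e f ε φ) (D (φ (Fin.last (m + 1))) (D (ε (Fin.last (m + 1))) y)) := by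
          rw [mul_smul_comm, smul_smul, mul_one_div_cancel hNne, one_smul]
          exact heqz
        rw [e1, e4, heqb, heqc, zero_add]
        conv_rhs => rw [hr, ea]
        rw [zero_add]
    · -- h ≥ 2
      obtain ⟨h2, rfl⟩ : ∃ h2, h = h2 + 2 := ⟨h - 2, by omega⟩
      have hcoef : ((n - h2 - 2 : ℕ) : ℝ) + 1 ≠ 0 := by positivity
      rw [show 2 * (n + 1) - (h2 + 2) = 2 * n - h2 by omega] at hpa
      obtain ⟨u', hu', hequ⟩ := IH' h2 (by omega) _ hpa
      rw [show n - h2 = (n - h2 - 2) + 2 by omega] at hequ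
      rw [show 2 * (n + 1) - (h2 + 2) - 1 = 2 * n - (h2 + 1) by omega] at hpb hpc
      obtain ⟨bt, hbt, heqb⟩ := IH' (h2 + 1) (by omega) _ hpb
      rw [show n - (h2 + 1) = (n - h2 - 2) + 1 by omega] at heqb
      obtain ⟨ct, hct, heqc⟩ := IH' (h2 + 1) (by omega) _ hpc
      rw [show n - (h2 + 1) = (n - h2 - 2) + 1 by omega] at heqc
      rw [show 2 * (n + 1) - (h2 + 2) - 1 - 1 = 2 * n - (h2 + 2) by omega] at hpd
      have hamem : om (fun i => e (Fin.castSucc i)) (fun i => f (Fin.castSucc i)) * u' ∈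
          W (fun i => e (Fin.castSucc i)) (fun i => f (Fin.castSucc i)) ^ (h2 + 2) := by
        have := Submodule.mul_mem_mul (om_mem_sq
          (fun i => e (Fin.castSucc i)) (fun i => f (Fin.castSucc i))) hu'
        rwa [← pow_add, Nat.add_comm 2 h2] at this
      have htmem : map (pmap e f ε φ) (D (φ (Fin.last n)) (D (ε (Fin.last n)) y))
          - ((n - h2 - 2 : ℕ) : ℝ) • (om (fun i => e (Fin.castSucc i))
              (fun i => f (Fin.castSucc i)) ^ (n - h2 - 2)
            * (om (fun i => e (Fin.castSucc i)) (fun i => f (Fin.castSucc i)) * u'))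
          - (om (fun i => e (Fin.castSucc i)) (fun i => f (Fin.castSucc i)) ^ (n - h2 - 2)
            * (om (fun i => e (Fin.castSucc i)) (fun i => f (Fin.castSucc i)) * u')) ∈
          W (fun i => e (Fin.castSucc i)) (fun i => f (Fin.castSucc i)) ^ (2 * n - (h2 + 2)) := by
        have hm1 : om (fun i => e (Fin.castSucc i)) (fun i => f (Fin.castSucc i)) ^ (n - h2 - 2)
            * (om (fun i => e (Fin.castSucc i)) (fun i => f (Fin.castSucc i)) * u') ∈
            W (fun i => e (Fin.castSucc i)) (fun i => f (Fin.castSucc i)) ^ (2 * n - (h2 + 2)) := by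
          have := Submodule.mul_mem_mul (om_pow_mem
            (fun i => e (Fin.castSucc i)) (fun i => f (Fin.castSucc i)) (n - h2 - 2)) hamem
          rwa [← pow_add, show 2 * (n - h2 - 2) + (h2 + 2) = 2 * n - (h2 + 2) by omega] at this
        exact Submodule.sub_mem _ (Submodule.sub_mem _ hpd (Submodule.smul_mem _ _ hm1)) hm1
      obtain ⟨z, hzmem, heqz⟩ := IH' (h2 + 2) (by omega) _ htmem
      rw [show n - (h2 + 2) = n - h2 - 2 by omega] at heqz
      have h5 : om (fun i => e (Fin.castSucc i)) (fun i => f (Fin.castSucc i)) ^ (n - h2 - 2 + 1)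
          * z ∈ W (fun i => e (Fin.castSucc i)) (fun i => f (Fin.castSucc i)) ^ (2 * n - h2) := by
        have := Submodule.mul_mem_mul (om_pow_mem
          (fun i => e (Fin.castSucc i)) (fun i => f (Fin.castSucc i)) (n - h2 - 2 + 1)) hzmem
        rwa [← pow_add, show 2 * (n - h2 - 2 + 1) + (h2 + 2) = 2 * n - h2 by omega] at this
      obtain ⟨w, hwmem, heqw⟩ := IH' h2 (by omega) _ h5
      have heqw2 : om (fun i => e (Fin.castSucc i)) (fun i => f (Fin.castSucc i))
            ^ (n - h2 - 2 + 1 + 1) * w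
          = om (fun i => e (Fin.castSucc i)) (fun i => f (Fin.castSucc i))
            ^ (n - h2 - 2 + 1) * z := by
        rw [show n - h2 - 2 + 1 + 1 = n - h2 by omega]
        exact heqw
      -- the corrected primitive part
      have hz0 : om (fun i => e (Fin.castSucc i)) (fun i => f (Fin.castSucc i)) ^ (n - h2 - 2 + 1)
          * (z - om (fun i => e (Fin.castSucc i)) (fun i => f (Fin.castSucc i)) * w) = 0 := by
        rw [mul_sub, ← mul_assoc, ← pow_succ, heqw2, sub_self]
      have hwa : om (fun i => e (Fin.castSucc i)) (fun i => f (Fin.castSucc i)) * w ∈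
          W (fun i => e (Fin.castSucc i)) (fun i => f (Fin.castSucc i)) ^ (h2 + 2) := by
        have := Submodule.mul_mem_mul (om_mem_sq
          (fun i => e (Fin.castSucc i)) (fun i => f (Fin.castSucc i))) hwmem
        rwa [← pow_add, Nat.add_comm 2 h2] at this
      refine ⟨(om (fun i => e (Fin.castSucc i)) (fun i => f (Fin.castSucc i)) * u'
          + (1 / (((n - h2 - 2 : ℕ) : ℝ) + 1))
            • (z - om (fun i => e (Fin.castSucc i)) (fun i => f (Fin.castSucc i)) * w))
          + ι ℝ (e (Fin.last n)) * bt + ι ℝ (f (Fin.last n)) * ct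
          + ι ℝ (e (Fin.last n)) * ι ℝ (f (Fin.last n)) * w, ?_, ?_⟩
      · refine Submodule.add_mem _ (Submodule.add_mem _ (Submodule.add_mem _ ?_ ?_) ?_) ?_
        · exact Submodule.add_mem _ (pow_mono (W_mono e f) _ hamem)
            (Submodule.smul_mem _ _ (pow_mono (W_mono e f) _ (Submodule.sub_mem _ hzmem hwa)))
        · exact mem_mul_pow (ιe_mem_W e f (Fin.last n)) (pow_mono (W_mono e f) _ hbt)
        · exact mem_mul_pow (ιf_mem_W e f (Fin.last n)) (pow_mono (W_mono e f) _ hct)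
        · have hin : ι ℝ (f (Fin.last n)) * w ∈ W e f ^ (h2 + 1) :=
            mem_mul_pow (ιf_mem_W e f (Fin.last n)) (pow_mono (W_mono e f) _ hwmem)
          have := mem_mul_pow (ιe_mem_W e f (Fin.last n)) hin
          rwa [← mul_assoc] at this
      · rw [show n + 1 - (h2 + 2) = (n - h2 - 2) + 1 by omega]
        rw [om_pow_form e f (n - h2 - 2) _ bt ct w]
        have e1 : om (fun i => e (Fin.castSucc i)) (fun i => f (Fin.castSucc i))
              ^ (n - h2 - 2 + 1)
            * (om (fun i => e (Fin.castSucc i)) (fun i => f (Fin.castSucc i)) * u'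
              + (1 / (((n - h2 - 2 : ℕ) : ℝ) + 1))
                • (z - om (fun i => e (Fin.castSucc i)) (fun i => f (Fin.castSucc i)) * w))
            = map (pmap e f ε φ) y := by
          rw [mul_add, mul_smul_comm, hz0, smul_zero, add_zero, ← mul_assoc, ← pow_succ]
          exact hequ
        have e4 : om (fun i => e (Fin.castSucc i)) (fun i => f (Fin.castSucc i))
              ^ (n - h2 - 2 + 1) * w
            + (((n - h2 - 2 : ℕ) : ℝ) + 1)
              • (om (fun i => e (Fin.castSucc i)) (fun i => f (Fin.castSucc i)) ^ (n - h2 - 2)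
                * (om (fun i => e (Fin.castSucc i)) (fun i => f (Fin.castSucc i)) * u'
                  + (1 / (((n - h2 - 2 : ℕ) : ℝ) + 1))
                    • (z - om (fun i => e (Fin.castSucc i)) (fun i => f (Fin.castSucc i)) * w)))
            = map (pmap e f ε φ) (D (φ (Fin.last n)) (D (ε (Fin.last n)) y)) := by
          have hXw : om (fun i => e (Fin.castSucc i)) (fun i => f (Fin.castSucc i))
                ^ (n - h2 - 2)
              * (om (fun i => e (Fin.castSucc i)) (fun i => f (Fin.castSucc i)) * w)
              = om (fun i => e (Fin.castSucc i)) (fun i => f (Fin.castSucc i))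
                ^ (n - h2 - 2 + 1) * w := by
            rw [← mul_assoc, ← pow_succ]
          rw [mul_add, mul_smul_comm, smul_add, smul_smul, mul_one_div_cancel hcoef, one_smul,
            mul_sub, hXw, heqz]
          module
        rw [e1, e4, heqb, heqc]
        exact hr.symm

end HL

/-- **Hard Lefschetz isomorphism.** If `V` is a `2n`-dimensional real symplectic vector
space with symplectic form `ω ∈ Λ² V*` (written in a symplectic basis), and `L α = ω ∧ α`
is the Lefschetz operator, then for `0 ≤ h ≤ n` the map
`L^(n-h) : Λ^h V* → Λ^(2n-h) V*` is a linear isomorphism. -/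
theorem lefschetz_power_bijective (n : ℕ) (V : Type) [AddCommGroup V] [Module ℝ V]
    [FiniteDimensional ℝ V] (hdim : Module.finrank ℝ V = 2 * n)
    (b : Module.Basis (Fin (n + n)) ℝ (Module.Dual ℝ V))
    (ω : ExteriorAlgebra ℝ (Module.Dual ℝ V))
    (hω : ω = ∑ i : Fin n, ι ℝ (b (Fin.castAdd n i)) * ι ℝ (b (Fin.natAdd n i)))
    (h : ℕ) (hh : h ≤ n) :
    Set.BijOn (fun x => ω ^ (n - h) * x)
      (gradePiece V h : Set (ExteriorAlgebra ℝ (Module.Dual ℝ V)))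
      (gradePiece V (2 * n - h) : Set (ExteriorAlgebra ℝ (Module.Dual ℝ V))) := by
  set M := Module.Dual ℝ V
  set e : Fin n → M := fun i => b (Fin.castAdd n i) with he
  set f : Fin n → M := fun i => b (Fin.natAdd n i) with hf
  set ε : Fin n → Module.Dual ℝ M := fun i => b.coord (Fin.castAdd n i) with hε
  set φ : Fin n → Module.Dual ℝ M := fun i => b.coord (Fin.natAdd n i) with hφ
  have coord_eq : ∀ (k l : Fin (n + n)), b.coord k (b l) = if l = k then 1 else 0 := by
    intro k l
    rw [Module.Basis.coord_apply, Module.Basis.repr_self, Finsupp.single_apply]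
  have Hee : ∀ i j, ε i (e j) = if i = j then 1 else 0 := by
    intro i j
    rw [hε, he, coord_eq]
    by_cases hij : i = j
    · subst hij; simp
    · rw [if_neg hij, if_neg]
      intro hc
      apply hij
      have := congrArg Fin.val hc
      simp only [Fin.coe_castAdd] at this
      exact Fin.ext this.symm
  have Hef : ∀ i j, ε i (f j) = 0 := by
    intro i j
    rw [hε, hf, coord_eq, if_neg]
    intro hc
    have := congrArg Fin.val hc
    simp only [Fin.coe_castAdd, Fin.coe_natAdd] at this
    omega
  have Hfe : ∀ i j, φ i (e j) = 0 := by
    intro i j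
    rw [hφ, he, coord_eq, if_neg]
    intro hc
    have := congrArg Fin.val hc
    simp only [Fin.coe_castAdd, Fin.coe_natAdd] at this
    omega
  have Hff : ∀ i j, φ i (f j) = if i = j then 1 else 0 := by
    intro i j
    rw [hφ, hf, coord_eq]
    by_cases hij : i = j
    · subst hij; simp
    · rw [if_neg hij, if_neg]
      intro hc
      apply hij
      have := congrArg Fin.val hc
      simp only [Fin.coe_natAdd] at this
      exact Fin.ext (by omega)
  have hrange : Set.range e ∪ Set.range f = Set.range b := by
    ext x
    constructor
    · rintro (⟨i, rfl⟩ | ⟨i, rfl⟩)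
      · exact ⟨Fin.castAdd n i, rfl⟩
      · exact ⟨Fin.natAdd n i, rfl⟩
    · rintro ⟨k, rfl⟩
      rcases Nat.lt_or_ge k.val n with hk | hk
      · left
        exact ⟨⟨k.val, hk⟩, congrArg b (Fin.ext rfl)⟩
      · right
        refine ⟨⟨k.val - n, by omega⟩, congrArg b (Fin.ext ?_)⟩
        simp only [Fin.coe_natAdd]
        omega
  have hWr : HL.W e f = LinearMap.range (ι ℝ : M →ₗ[ℝ] ExteriorAlgebra ℝ M) := by
    rw [HL.W, HL.Vsp, hrange, b.span_eq, Submodule.map_top]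
  have hgp : ∀ k : ℕ, (gradePiece V k : Submodule ℝ (ExteriorAlgebra ℝ M)) = HL.W e f ^ k := by
    intro k
    rw [gradePiece, hWr]
  have hωom : ω = HL.om e f := by rw [hω]; rfl
  constructor
  · -- maps to
    intro x hx
    simp only [Set.mem_preimage, SetLike.mem_coe, hgp] at hx ⊢
    rw [hωom]
    have h1 := Submodule.mul_mem_mul (HL.om_pow_mem e f (n - h)) hx
    rwa [← pow_add, show 2 * (n - h) + h = 2 * n - h by omega] at h1
  constructor
  · -- injective on
    intro x hx y hy heq
    simp only [SetLike.mem_coe, hgp] at hx hy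
    simp only [hωom] at heq
    have hsub : HL.om e f ^ (n - h) * (x - y) = 0 := by
      rw [mul_sub, heq, sub_self]
    have := HL.master_inj n e f ε φ Hee Hef Hfe Hff h (n - h) (by omega) (x - y)
      (Submodule.sub_mem _ hx hy) hsub
    exact sub_eq_zero.mp this
  · -- surjective onto
    intro y hy
    simp only [SetLike.mem_coe, hgp] at hy
    obtain ⟨x, hx, hxy⟩ := HL.master_surj n e f ε φ Hee Hef Hfe Hff h hh y hy
    refine ⟨x, ?_, ?_⟩
    · simp only [SetLike.mem_coe, hgp]
      exact hx
    · rw [hωom]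
      exact hxy
end

section
/- Let V be a 2n-dimensional real symplectic vector space. For h ≤ n, the map L^{n-h} restricts to a linear isomorphism from the primitive h-covectors P^h onto {γ ∈ Λ^{2n-h} V* : L γ = 0}. -/
set_option synthInstance.maxHeartbeats 1000000
set_option maxHeartbeats 1000000

open ExteriorAlgebra

section Lefschetz

variable {n : ℕ} {V : Type} [AddCommGroup V] [Module ℝ V]
  (b : Module.Basis (Fin (n + n)) ℝ (Module.Dual ℝ V))

/-- contraction by the `j`-th dual basis functional -/
noncomputable def Cop (j : Fin (n + n)) :
    ExteriorAlgebra ℝ (Module.Dual ℝ V) →ₗ[ℝ] ExteriorAlgebra ℝ (Module.Dual ℝ V) :=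
  CliffordAlgebra.contractLeft (Q := (0 : QuadraticForm ℝ (Module.Dual ℝ V))) (b.coord j)

theorem Cop_ι_mul (j : Fin (n + n)) (v : Module.Dual ℝ V)
    (x : ExteriorAlgebra ℝ (Module.Dual ℝ V)) :
    Cop b j (ι ℝ v * x) = b.coord j v • x - ι ℝ v * Cop b j x :=
  CliffordAlgebra.contractLeft_ι_mul _ _ _

theorem Cop_basis_mul (j k : Fin (n + n)) (x : ExteriorAlgebra ℝ (Module.Dual ℝ V)) :
    Cop b j (ι ℝ (b k) * x) = (if k = j then x else 0) - ι ℝ (b k) * Cop b j x := by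
  rw [Cop_ι_mul, Module.Basis.coord_apply, Module.Basis.repr_self, Finsupp.single_apply]
  split <;> simp

theorem Cop_algebraMap (j : Fin (n + n)) (r : ℝ) :
    Cop b j (algebraMap ℝ _ r) = 0 :=
  CliffordAlgebra.contractLeft_algebraMap _ _ _

end Lefschetz

section Ops

variable {n : ℕ} {V : Type} [AddCommGroup V] [Module ℝ V]

theorem ca_eq_ca {i j : Fin n} : Fin.castAdd n i = Fin.castAdd n j ↔ i = j := by
  simp [Fin.ext_iff]

theorem na_eq_na {i j : Fin n} : Fin.natAdd n i = Fin.natAdd n j ↔ i = j := by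
  simp [Fin.ext_iff]

theorem ca_ne_na {i j : Fin n} : Fin.castAdd n i ≠ Fin.natAdd n j := by
  have := i.isLt
  simp [Fin.ext_iff]; omega

theorem na_ne_ca {i j : Fin n} : Fin.natAdd n i ≠ Fin.castAdd n j := by
  have := j.isLt
  simp [Fin.ext_iff]; omega

end Ops

section Ops2

variable {n : ℕ} {V : Type} [AddCommGroup V] [Module ℝ V]
  (b : Module.Basis (Fin (n + n)) ℝ (Module.Dual ℝ V))

/-- the lowering operator -/
noncomputable def Lam :
    ExteriorAlgebra ℝ (Module.Dual ℝ V) →ₗ[ℝ] ExteriorAlgebra ℝ (Module.Dual ℝ V) :=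
  ∑ i : Fin n, (Cop b (Fin.natAdd n i)).comp (Cop b (Fin.castAdd n i))

/-- the number operator -/
noncomputable def Nop :
    ExteriorAlgebra ℝ (Module.Dual ℝ V) →ₗ[ℝ] ExteriorAlgebra ℝ (Module.Dual ℝ V) :=
  ∑ j : Fin (n + n), (LinearMap.mulLeft ℝ (ι ℝ (b j))).comp (Cop b j)

noncomputable def omgB : ExteriorAlgebra ℝ (Module.Dual ℝ V) :=
  ∑ i : Fin n, ι ℝ (b (Fin.castAdd n i)) * ι ℝ (b (Fin.natAdd n i))

theorem comm_LamL (x : ExteriorAlgebra ℝ (Module.Dual ℝ V)) :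
    Lam b (omgB b * x) = omgB b * Lam b x + (n : ℝ) • x - Nop b x := by
  set e : Fin n → ExteriorAlgebra ℝ (Module.Dual ℝ V) := fun i => ι ℝ (b (Fin.castAdd n i))
    with he
  set f : Fin n → ExteriorAlgebra ℝ (Module.Dual ℝ V) := fun i => ι ℝ (b (Fin.natAdd n i))
    with hf
  have key : ∀ j i : Fin n, Cop b (Fin.natAdd n j) (Cop b (Fin.castAdd n j) (e i * (f i * x)))
      = e i * (f i * (Cop b (Fin.natAdd n j) (Cop b (Fin.castAdd n j) x)))
        + (if i = j then x - f j * (Cop b (Fin.natAdd n j) x)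
            - e j * (Cop b (Fin.castAdd n j) x) else 0) := by
    intro j i
    by_cases hij : i = j
    · subst hij
      simp only [he, hf, Cop_basis_mul, if_pos rfl, if_neg na_ne_ca, if_neg ca_ne_na,
        map_sub, map_neg, map_zero, if_true, ite_true]
      noncomm_ring
    · simp only [he, hf, Cop_basis_mul, ca_eq_ca, na_eq_na, hij, if_false, ite_false,
        if_neg na_ne_ca, if_neg ca_ne_na, map_sub, map_neg, map_zero]
      noncomm_ring
  calc Lam b (omgB b * x)
      = ∑ j : Fin n, ∑ i : Fin n,
          Cop b (Fin.natAdd n j) (Cop b (Fin.castAdd n j) (e i * (f i * x))) := by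
        rw [omgB, Lam, LinearMap.sum_apply]
        refine Finset.sum_congr rfl fun j _ => ?_
        rw [LinearMap.comp_apply, Finset.sum_mul]
        simp_rw [mul_assoc]
        rw [map_sum, map_sum]
    _ = ∑ j : Fin n, ((∑ i : Fin n,
          e i * (f i * (Cop b (Fin.natAdd n j) (Cop b (Fin.castAdd n j) x))))
          + (x - f j * (Cop b (Fin.natAdd n j) x) - e j * (Cop b (Fin.castAdd n j) x))) := by
        refine Finset.sum_congr rfl fun j _ => ?_
        rw [Finset.sum_congr rfl fun i _ => key j i, Finset.sum_add_distrib,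
          Finset.sum_ite_eq' Finset.univ j _]
        simp
    _ = omgB b * Lam b x + (n : ℝ) • x - Nop b x := by
        rw [Finset.sum_add_distrib]
        have h1 : omgB b * Lam b x = ∑ j : Fin n, ∑ i : Fin n,
            e i * (f i * (Cop b (Fin.natAdd n j) (Cop b (Fin.castAdd n j) x))) := by
          rw [omgB, Lam, LinearMap.sum_apply, Finset.sum_mul]
          simp_rw [Finset.mul_sum, mul_assoc, LinearMap.comp_apply]
          exact Finset.sum_comm
        have h2 : Nop b x = (∑ j : Fin n, e j * Cop b (Fin.castAdd n j) x)
            + ∑ j : Fin n, f j * Cop b (Fin.natAdd n j) x := by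
          rw [Nop, LinearMap.sum_apply, Fin.sum_univ_add]
          simp [he, hf]
        rw [h1, h2, Finset.sum_sub_distrib, Finset.sum_sub_distrib, Finset.sum_const,
          Finset.card_univ, Fintype.card_fin, Nat.cast_smul_eq_nsmul ℝ n x]
        abel

theorem Nop_ι_mul (v : Module.Dual ℝ V) (x : ExteriorAlgebra ℝ (Module.Dual ℝ V)) :
    Nop b (ι ℝ v * x) = ι ℝ v * x + ι ℝ v * Nop b x := by
  have swap : ∀ (w : Module.Dual ℝ V) (y : ExteriorAlgebra ℝ (Module.Dual ℝ V)),
      ι ℝ w * (ι ℝ v * y) = -(ι ℝ v * (ι ℝ w * y)) := by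
    intro w y
    rw [← mul_assoc, ← mul_assoc, eq_neg_of_add_eq_zero_left (ι_add_mul_swap w v), neg_mul]
  have h1 : ∑ j : Fin (n + n), b.coord j v • (ι ℝ (b j) * x) = ι ℝ v * x := by
    simp_rw [← smul_mul_assoc]
    rw [← Finset.sum_mul]
    congr 1
    simp_rw [← LinearMap.map_smul (ι ℝ : Module.Dual ℝ V →ₗ[ℝ] _)]
    rw [← map_sum]
    congr 1
    simp_rw [Module.Basis.coord_apply]
    exact b.sum_repr v
  rw [Nop, LinearMap.sum_apply, LinearMap.sum_apply]
  simp_rw [LinearMap.comp_apply, LinearMap.mulLeft_apply, Cop_ι_mul, mul_sub, mul_smul_comm,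
    swap, sub_neg_eq_add, Finset.sum_add_distrib, ← smul_mul_assoc]
  rw [← Finset.mul_sum]
  congr 1
  simp_rw [smul_mul_assoc]
  exact h1

theorem Nop_grade (k : ℕ) (x : ExteriorAlgebra ℝ (Module.Dual ℝ V))
    (hx : x ∈ gradePiece V k) : Nop b x = (k : ℝ) • x := by
  unfold gradePiece at hx
  induction hx using Submodule.pow_induction_on_left' with
  | algebraMap r =>
      rw [Nat.cast_zero, zero_smul, Nop, LinearMap.sum_apply]
      simp [Cop_algebraMap]
  | add x y i hx hy ihx ihy => rw [map_add, ihx, ihy, ← smul_add]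
  | mem_mul m hm i x hx ih =>
      obtain ⟨v, rfl⟩ := hm
      rw [Nop_ι_mul, ih, mul_smul_comm, Nat.cast_succ]
      rw [add_smul, one_smul, add_comm]

theorem Cop_grade (j : Fin (n + n)) (k : ℕ) (x : ExteriorAlgebra ℝ (Module.Dual ℝ V))
    (hx : x ∈ gradePiece V k) :
    Cop b j x ∈ gradePiece V (k - 1) ∧ (k = 0 → Cop b j x = 0) := by
  unfold gradePiece at hx ⊢
  induction hx using Submodule.pow_induction_on_left' with
  | algebraMap r =>
      rw [Cop_algebraMap]
      exact ⟨Submodule.zero_mem _, fun _ => rfl⟩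
  | add x y i hx hy ihx ihy =>
      rw [map_add]
      exact ⟨Submodule.add_mem _ ihx.1 ihy.1, fun h0 => by rw [ihx.2 h0, ihy.2 h0, add_zero]⟩
  | mem_mul m hm i x hx ih =>
      obtain ⟨v, rfl⟩ := hm
      rw [Cop_ι_mul]
      refine ⟨?_, fun h0 => by omega⟩
      rcases i with _ | i'
      · rw [ih.2 rfl, mul_zero, sub_zero]
        exact Submodule.smul_mem _ _ hx
      · refine Submodule.sub_mem _ (Submodule.smul_mem _ _ hx) ?_
        have h2 : ι ℝ v * Cop b j x ∈
            LinearMap.range (ι ℝ : Module.Dual ℝ V →ₗ[ℝ] ExteriorAlgebra ℝ (Module.Dual ℝ V)) *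
            LinearMap.range (ι ℝ : Module.Dual ℝ V →ₗ[ℝ] _) ^ (i' + 1 - 1) :=
          Submodule.mul_mem_mul (LinearMap.mem_range_self _ v) ih.1
        rw [Nat.add_sub_cancel, ← pow_succ'] at h2
        simpa using h2

theorem Lam_grade (k : ℕ) (x : ExteriorAlgebra ℝ (Module.Dual ℝ V))
    (hx : x ∈ gradePiece V (k + 2)) : Lam b x ∈ gradePiece V k := by
  rw [Lam, LinearMap.sum_apply]
  refine Submodule.sum_mem _ fun i _ => ?_
  rw [LinearMap.comp_apply]
  have h1 := (Cop_grade b (Fin.castAdd n i) (k + 2) x hx).1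
  have h2 := (Cop_grade b (Fin.natAdd n i) (k + 2 - 1) _ h1).1
  simpa using h2

theorem Lam_grade0 (x : ExteriorAlgebra ℝ (Module.Dual ℝ V))
    (hx : x ∈ gradePiece V 0) : Lam b x = 0 := by
  rw [Lam, LinearMap.sum_apply]
  refine Finset.sum_eq_zero fun i _ => ?_
  rw [LinearMap.comp_apply, (Cop_grade b (Fin.castAdd n i) 0 x hx).2 rfl, map_zero]

theorem Lam_grade1 (x : ExteriorAlgebra ℝ (Module.Dual ℝ V))
    (hx : x ∈ gradePiece V 1) : Lam b x = 0 := by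
  rw [Lam, LinearMap.sum_apply]
  refine Finset.sum_eq_zero fun i _ => ?_
  rw [LinearMap.comp_apply,
    (Cop_grade b (Fin.natAdd n i) 0 _ (Cop_grade b (Fin.castAdd n i) 1 x hx).1).2 rfl]

theorem mul_grade {a c : ℕ} {x y : ExteriorAlgebra ℝ (Module.Dual ℝ V)}
    (hx : x ∈ gradePiece V a) (hy : y ∈ gradePiece V c) : x * y ∈ gradePiece V (a + c) := by
  unfold gradePiece at *
  rw [pow_add]
  exact Submodule.mul_mem_mul hx hy

theorem ι_grade1 (v : Module.Dual ℝ V) : ι ℝ v ∈ gradePiece V 1 := by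
  unfold gradePiece
  rw [pow_one]
  exact LinearMap.mem_range_self _ v

theorem omg_grade : omgB b ∈ gradePiece V 2 := by
  refine Submodule.sum_mem _ fun i _ => ?_
  exact mul_grade (ι_grade1 _) (ι_grade1 _)

theorem omg_pow_grade (r : ℕ) : omgB b ^ r ∈ gradePiece V (2 * r) := by
  have h1 : omgB b ^ r ∈ (gradePiece V 2 : Submodule ℝ _) ^ r :=
    Submodule.pow_mem_pow _ (omg_grade b) r
  unfold gradePiece at *
  rwa [← pow_mul] at h1

theorem comm_graded (k : ℕ) (x : ExteriorAlgebra ℝ (Module.Dual ℝ V))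
    (hx : x ∈ gradePiece V k) :
    Lam b (omgB b * x) = omgB b * Lam b x + ((n : ℝ) - k) • x := by
  rw [comm_LamL, Nop_grade b k x hx, sub_smul]
  abel

theorem iterL (r k : ℕ) (x : ExteriorAlgebra ℝ (Module.Dual ℝ V))
    (hx : x ∈ gradePiece V k) :
    Lam b (omgB b ^ (r + 1) * x) = omgB b ^ (r + 1) * Lam b x
      + (((r : ℝ) + 1) * ((n : ℝ) - k - r)) • (omgB b ^ r * x) := by
  induction r with
  | zero =>
      have h := comm_graded b k x hx
      rw [pow_one, pow_zero, one_mul, h]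
      push_cast
      module
  | succ r ih =>
      have hmem : omgB b ^ (r + 1) * x ∈ gradePiece V (2 * (r + 1) + k) :=
        mul_grade (omg_pow_grade b (r + 1)) hx
      have h1 : omgB b ^ (r + 1 + 1) * x = omgB b * (omgB b ^ (r + 1) * x) := by
        rw [pow_succ', mul_assoc]
      rw [h1, comm_graded b _ _ hmem, ih, mul_add, mul_smul_comm, ← mul_assoc, ← pow_succ']
      rw [show omgB b * (omgB b ^ r * x) = omgB b ^ (r + 1) * x from by
        rw [← mul_assoc, ← pow_succ']]
      push_cast
      module

theorem lamPow_grade (r : ℕ) : ∀ (k : ℕ) (x : ExteriorAlgebra ℝ (Module.Dual ℝ V)),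
    x ∈ gradePiece V (k + 2 * r) → (Lam b ^ r) x ∈ gradePiece V k := by
  induction r with
  | zero => intro k x hx; simpa using hx
  | succ r ih =>
      intro k x hx
      have hx' : Lam b x ∈ gradePiece V (k + 2 * r) := by
        refine Lam_grade b _ x ?_
        have : k + 2 * r + 2 = k + 2 * (r + 1) := by ring
        rwa [this]
      have : (Lam b ^ (r + 1)) x = (Lam b ^ r) (Lam b x) := by
        rw [pow_succ, Module.End.mul_apply]
      rw [this]
      exact ih k _ hx'

theorem iterLam (r : ℕ) : ∀ (k : ℕ) (x : ExteriorAlgebra ℝ (Module.Dual ℝ V)),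
    x ∈ gradePiece V (k + 2 * (r + 1)) →
    omgB b * ((Lam b ^ (r + 1)) x) = (Lam b ^ (r + 1)) (omgB b * x)
      + (((r : ℝ) + 1) * (((k : ℝ) + 2 * ((r : ℝ) + 1)) - n - r)) • ((Lam b ^ r) x) := by
  induction r with
  | zero =>
      intro k x hx
      have h := comm_graded b (k + 2 * (0 + 1)) x hx
      have h' : omgB b * Lam b x = Lam b (omgB b * x) + (((k : ℝ) + 2) - n) • x := by
        rw [h]
        push_cast
        module
      rw [pow_one, pow_zero, Module.End.one_apply, h']
      push_cast
      module
  | succ r ih =>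
      intro k x hx
      have hx2 : x ∈ gradePiece V ((k + 2 * (r + 1)) + 2) := by
        have : k + 2 * (r + 1) + 2 = k + 2 * (r + 1 + 1) := by ring
        rwa [this]
      have hx' : Lam b x ∈ gradePiece V (k + 2 * (r + 1)) := Lam_grade b _ x hx2
      have e1 : (Lam b ^ (r + 1 + 1)) x = (Lam b ^ (r + 1)) (Lam b x) := by
        rw [pow_succ, Module.End.mul_apply]
      have e2 : (Lam b ^ (r + 1)) (Lam b (omgB b * x)) = (Lam b ^ (r + 1 + 1)) (omgB b * x) := by
        rw [← Module.End.mul_apply, ← pow_succ]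
      have e3 : (Lam b ^ r) (Lam b x) = (Lam b ^ (r + 1)) x := by
        rw [← Module.End.mul_apply, ← pow_succ]
      have hbase : omgB b * Lam b x
          = Lam b (omgB b * x) + (((k : ℝ) + 2 * ((r : ℝ) + 1 + 1)) - n) • x := by
        have h := comm_graded b (k + 2 * (r + 1 + 1)) x hx
        rw [h]
        push_cast
        module
      rw [e1, ih k (Lam b x) hx', hbase, map_add, map_smul, e2, e3]
      push_cast
      module

theorem descent (k : ℕ) (x : ExteriorAlgebra ℝ (Module.Dual ℝ V))
    (hx : x ∈ gradePiece V k) (hlam : Lam b x = 0) :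
    ∀ j, j + k ≤ n → omgB b ^ j * x = 0 → x = 0 := by
  intro j
  induction j with
  | zero => intro _ h0; simpa using h0
  | succ j ih =>
      intro hj h0
      have h := iterL b j k x hx
      rw [h0, hlam, mul_zero, map_zero] at h
      have hcast : ((j : ℝ) + 1) + (k : ℝ) ≤ (n : ℝ) := by
        have := Nat.cast_le (α := ℝ).mpr hj
        push_cast at this
        linarith
      have hc : ((j : ℝ) + 1) * ((n : ℝ) - k - j) ≠ 0 := by
        have h1 : (0 : ℝ) < (j : ℝ) + 1 := by positivity
        have h2 : (0 : ℝ) < (n : ℝ) - k - j := by linarith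
        positivity
      have h0' : omgB b ^ j * x = 0 := by
        have := h.symm
        rw [zero_add] at this
        exact (smul_eq_zero.mp this).resolve_left hc
      exact ih (by omega) h0'

theorem primitive_lam_zero : ∀ (h : ℕ), h ≤ n →
    ∀ x ∈ gradePiece V h, omgB b ^ (n - h + 1) * x = 0 → Lam b x = 0 := by
  intro h
  induction h using Nat.strong_induction_on with
  | _ h ih =>
    match h with
    | 0 => intro _ x hx _; exact Lam_grade0 b x hx
    | 1 => intro _ x hx _; exact Lam_grade1 b x hx
    | (h' + 2) =>
      intro hh x hx h0
      obtain ⟨d, hd⟩ : ∃ d, n = h' + 2 + d := ⟨n - (h' + 2), by omega⟩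
      have h0' : omgB b ^ (d + 1) * x = 0 := by
        have : n - (h' + 2) + 1 = d + 1 := by omega
        rwa [this] at h0
      have hβ : Lam b x ∈ gradePiece V h' := Lam_grade b h' x hx
      have hkey := iterL b (d + 1) (h' + 2) x hx
      have hL : omgB b ^ (d + 1 + 1) * x = 0 := by
        rw [pow_succ', mul_assoc, h0', mul_zero]
      rw [hL, h0', smul_zero, add_zero, map_zero] at hkey
      -- hkey : 0 = omgB b ^ (d + 2) * Lam b x
      have hβ0 : omgB b ^ (d + 2) * Lam b x = 0 := hkey.symm
      have hlamβ : Lam b (Lam b x) = 0 := by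
        refine ih h' (by omega) (by omega) _ hβ ?_
        have : n - h' + 1 = d + 3 := by omega
        rw [this, pow_succ', mul_assoc, hβ0, mul_zero]
      exact descent b h' (Lam b x) hβ hlamβ (d + 2) (by omega) hβ0

end Ops2

/-- **Lefschetz isomorphism onto the kernel of `L`.** Let `V` be a `2n`-dimensional real
symplectic vector space with symplectic form `ω` (written in a symplectic basis) and
Lefschetz operator `L α = ω ∧ α`. For `h ≤ n`, the map `L^(n-h)` restricts to a linear
isomorphism from the primitive `h`-covectors
`P^h = {α ∈ Λ^h V* : L^(n-h+1) α = 0}` onto `{γ ∈ Λ^(2n-h) V* : L γ = 0}`. -/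
theorem lefschetz_power_bijOn_primitive (n : ℕ) (V : Type) [AddCommGroup V] [Module ℝ V]
    [FiniteDimensional ℝ V] (hdim : Module.finrank ℝ V = 2 * n)
    (b : Module.Basis (Fin (n + n)) ℝ (Module.Dual ℝ V))
    (ω : ExteriorAlgebra ℝ (Module.Dual ℝ V))
    (hω : ω = ∑ i : Fin n, ι ℝ (b (Fin.castAdd n i)) * ι ℝ (b (Fin.natAdd n i)))
    (h : ℕ) (hh : h ≤ n) :
    Set.BijOn (fun x => ω ^ (n - h) * x)
      {α | α ∈ gradePiece V h ∧ ω ^ (n - h + 1) * α = 0}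
      {γ | γ ∈ gradePiece V (2 * n - h) ∧ ω * γ = 0} := by
  have hω' : ω = omgB b := hω
  subst hω'
  set d : ℕ := n - h with hdd
  have hdn : d + h = n := by omega
  refine ⟨?_, ?_, ?_⟩
  · -- MapsTo
    rintro α ⟨hα1, hα2⟩
    constructor
    · have hmem : omgB b ^ d * α ∈ gradePiece V (2 * d + h) :=
        mul_grade (omg_pow_grade b d) hα1
      have : 2 * d + h = 2 * n - h := by omega
      rwa [this] at hmem
    · show omgB b * (omgB b ^ d * α) = 0
      rw [← mul_assoc, ← pow_succ']
      exact hα2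
  · -- InjOn
    rintro x ⟨hx1, hx2⟩ y ⟨hy1, hy2⟩ hxy
    have hδ1 : x - y ∈ gradePiece V h := Submodule.sub_mem _ hx1 hy1
    have hδ2 : omgB b ^ (d + 1) * (x - y) = 0 := by
      rw [mul_sub, hx2, hy2, sub_zero]
    have hδ3 : omgB b ^ d * (x - y) = 0 := by
      rw [mul_sub]
      simpa [sub_eq_zero] using hxy
    have hlam : Lam b (x - y) = 0 := primitive_lam_zero b h hh (x - y) hδ1 hδ2
    have := descent b h (x - y) hδ1 hlam d (by omega) hδ3
    exact sub_eq_zero.mp this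
  · -- SurjOn
    rintro γ ⟨hγ1, hγ2⟩
    have claim : ∀ r, r ≤ d → ∃ c : ℝ, 0 < c ∧ omgB b ^ r * ((Lam b ^ r) γ) = c • γ := by
      intro r
      induction r with
      | zero => intro _; exact ⟨1, one_pos, by simp⟩
      | succ r ih =>
          intro hr
          obtain ⟨c, hc, hcr⟩ := ih (by omega)
          obtain ⟨k, hk⟩ : ∃ k, k + 2 * (r + 1) = 2 * n - h := ⟨2 * n - h - 2 * (r + 1), by omega⟩
          have hγ1' : γ ∈ gradePiece V (k + 2 * (r + 1)) := by rwa [hk]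
          have hil := iterLam b r k γ hγ1'
          rw [hγ2, map_zero, zero_add] at hil
          have hcoef : ((k : ℝ) + 2 * ((r : ℝ) + 1)) - n - r = (n : ℝ) - h - r := by
            have hcast : (k : ℝ) + 2 * ((r : ℝ) + 1) = 2 * (n : ℝ) - h := by
              have := congrArg (Nat.cast (R := ℝ)) hk
              push_cast at this
              rw [Nat.cast_sub (by omega)] at this
              push_cast at this
              linarith
            linarith
          rw [hcoef] at hil
          refine ⟨((r : ℝ) + 1) * ((n : ℝ) - h - r) * c, ?_, ?_⟩
          · have h1 : (0 : ℝ) < (r : ℝ) + 1 := by positivity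
            have h2 : (0 : ℝ) < (n : ℝ) - h - r := by
              have : ((r : ℝ) + 1) + (h : ℝ) ≤ (n : ℝ) := by
                have := Nat.cast_le (α := ℝ).mpr (show r + 1 + h ≤ n by omega)
                push_cast at this
                linarith
              linarith
            positivity
          · rw [pow_succ, mul_assoc, hil, mul_smul_comm, hcr, smul_smul]
    obtain ⟨c, hc, hcd⟩ := claim d le_rfl
    have hγmem : γ ∈ gradePiece V (h + 2 * d) := by
      have : h + 2 * d = 2 * n - h := by omega
      rwa [this]
    refine ⟨c⁻¹ • ((Lam b ^ d) γ), ⟨?_, ?_⟩, ?_⟩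
    · exact Submodule.smul_mem _ _ (lamPow_grade b d h γ hγmem)
    · show omgB b ^ (d + 1) * (c⁻¹ • (Lam b ^ d) γ) = 0
      rw [pow_succ', mul_assoc, mul_smul_comm, hcd, smul_smul, inv_mul_cancel₀ hc.ne',
        one_smul, hγ2]
    · show omgB b ^ d * (c⁻¹ • (Lam b ^ d) γ) = γ
      rw [mul_smul_comm, hcd, smul_smul, inv_mul_cancel₀ hc.ne', one_smul]
end
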